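/- arXiv:1103.5054 — 10 statements merged into one kernel-verified Lean document; each statement's English description precedes it below -/
import Mathlib

section
/- For any rational numbers x_1, …, x_n, the determinant of the n×n matrix whose (i,j) entry is the generalized binomial coefficient C(x_i, j) = x_i(x_i−1)⋯(x_i−j+1)/j!, for 1 ≤ i, j ≤ n, equals (∏_{i=1}^n x_i) · (∏_{1 ≤ i < j ≤ n} (x_j − x_i)) / (∏_{j=1}^n j!). -/
/-- The generalized binomial coefficient `C(x, j) = x(x-1)⋯(x-j+1)/j!` for `x : ℚ`. -/
def qBinom (x : ℚ) (j : ℕ) : ℚ :=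
  (∏ k ∈ Finset.range j, (x - k)) / (Nat.factorial j)

open Polynomial Matrix in
/-- For rational numbers `x 0, …, x (n-1)` (representing `x_1, …, x_n`), the determinant
of the matrix with entries `C(x_i, j)`, `1 ≤ i, j ≤ n`, equals
`(∏ᵢ x_i) ⬝ (∏_{i<j} (x_j - x_i)) / (∏_{j=1}^n j!)`. -/
theorem stmt1 (n : ℕ) (x : Fin n → ℚ) :
    Matrix.det (Matrix.of fun i j : Fin n => qBinom (x i) ((j : ℕ) + 1)) =
      (∏ i, x i) * (∏ j : Fin n, ∏ i ∈ Finset.Iio j, (x j - x i)) /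
        (∏ j : Fin n, (Nat.factorial ((j : ℕ) + 1) : ℚ)) := by
  set p : Fin n → ℚ[X] := fun j => ∏ k ∈ Finset.range (j : ℕ), (X - C ((k : ℚ) + 1)) with hp
  have h_monic : ∀ j, (p j).Monic := fun j =>
    monic_prod_of_monic _ _ fun k _ => monic_X_sub_C _
  have h_deg : ∀ j : Fin n, (p j).natDegree = (j : ℕ) := by
    intro j
    have h1 : (p j).natDegree = ∑ k ∈ Finset.range (j : ℕ), (X - C ((k : ℚ) + 1)).natDegree :=
      Polynomial.natDegree_prod_of_monic _ _ (fun k _ => monic_X_sub_C _)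
    rw [h1]
    simp only [Polynomial.natDegree_X_sub_C]
    simp
  have key : ∀ i j : Fin n, qBinom (x i) ((j : ℕ) + 1) =
      x i * ((1 : ℚ) / (Nat.factorial ((j : ℕ) + 1))) * (p j).eval (x i) := by
    intro i j
    rw [qBinom, Finset.prod_range_succ']
    simp only [hp, eval_prod, eval_sub, eval_X, eval_C]
    push_cast
    ring
  have hM : (Matrix.of fun i j : Fin n => qBinom (x i) ((j : ℕ) + 1)) =
      Matrix.of fun i j : Fin n =>
        x i * (Matrix.of fun i j : Fin n =>
          ((1 : ℚ) / (Nat.factorial ((j : ℕ) + 1))) * (Matrix.of fun i j : Fin n =>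
            (p j).eval (x i)) i j) i j := by
    ext i j
    simp only [Matrix.of_apply]
    rw [key i j]; ring
  rw [hM, Matrix.det_mul_column, Matrix.det_mul_row,
    ← Matrix.det_eval_matrixOfPolynomials_eq_det_vandermonde x p h_deg h_monic,
    Matrix.det_vandermonde]
  have hswap : (∏ i : Fin n, ∏ j ∈ Finset.Ioi i, (x j - x i)) =
      ∏ j : Fin n, ∏ i ∈ Finset.Iio j, (x j - x i) := by
    rw [Finset.prod_comm' (t' := Finset.univ) (s' := fun j => Finset.Iio j)]
    intro i j
    simp [Finset.mem_Ioi, Finset.mem_Iio, and_comm]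
  rw [hswap, Finset.prod_div_distrib]
  simp [div_eq_mul_inv, Finset.prod_inv_distrib]
  ring
end

section
/- For any rational numbers x_1, …, x_n, the determinant of the n×n matrix whose (i,j) entry is the generalized binomial coefficient C(x_i, j−1), for 1 ≤ i, j ≤ n, equals ∏_{1 ≤ i < j ≤ n} (x_j − x_i)/(j − i). -/
open Finset Polynomial
open scoped Nat

lemma qBinom_eq_inv_factorial_mul_eval (x : ℚ) (j : ℕ) :
    qBinom x j = (j ! : ℚ)⁻¹ * (descPochhammer ℚ j).eval x := by
  rw [qBinom, descPochhammer_eval_eq_prod_range, div_eq_inv_mul]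

lemma Fin.prod_Iio_natCast_sub_eq_factorial {R : Type*} [CommRing R] {n : ℕ} (j : Fin n) :
    ∏ i ∈ Iio j, (((j : ℕ) : R) - ((i : ℕ) : R)) = (j : ℕ)! := by
  have h := prod_map (Iio j) Fin.valEmbedding fun i => ((j : ℕ) : R) - (i : R)
  rw [Fin.map_valEmbedding_Iio, Nat.Iio_eq_range, ← descPochhammer_eval_eq_prod_range,
    descPochhammer_eval_eq_descFactorial, Nat.descFactorial_self] at h
  exact h.symm

lemma prod_prod_Iio_eq_prod_prod_Ioi {α M : Type*} [Fintype α] [LinearOrder α]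
    [LocallyFiniteOrderBot α] [LocallyFiniteOrderTop α] [CommMonoid M] (f : α → α → M) :
    ∏ j, ∏ i ∈ Iio j, f i j = ∏ i, ∏ j ∈ Ioi i, f i j :=
  prod_comm' fun j i => by simp

lemma det_of_qBinom {n : ℕ} (x : Fin n → ℚ) :
    (Matrix.of fun i j : Fin n => qBinom (x i) j).det =
      (∏ j : Fin n, ((j : ℕ)! : ℚ)⁻¹) * (Matrix.vandermonde x).det := by
  simp_rw [qBinom_eq_inv_factorial_mul_eval]
  rw [Matrix.det_eval_matrixOfPolynomials_eq_det_vandermonde x (fun j => descPochhammer ℚ j)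
      (fun j => descPochhammer_natDegree ℚ j) (fun j => monic_descPochhammer ℚ j)]
  exact Matrix.det_mul_row _ (Matrix.of fun i j : Fin n => (descPochhammer ℚ j).eval (x i))

/-- For rational numbers `x 0, …, x (n-1)` (representing `x_1, …, x_n`), the determinant
of the matrix with entries `C(x_i, j-1)`, `1 ≤ i, j ≤ n`, equals
`∏_{1 ≤ i < j ≤ n} (x_j - x_i)/(j - i)`. -/
theorem stmt2 (n : ℕ) (x : Fin n → ℚ) :
    Matrix.det (Matrix.of fun i j : Fin n => qBinom (x i) (j : ℕ)) =
      ∏ j : Fin n, ∏ i ∈ Finset.Iio j, (x j - x i) / (((j : ℕ) : ℚ) - ((i : ℕ) : ℚ)) := by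
  rw [det_of_qBinom, Matrix.det_vandermonde,
    ← prod_prod_Iio_eq_prod_prod_Ioi fun i j => x j - x i, ← prod_mul_distrib]
  refine prod_congr rfl fun j _ => ?_
  rw [prod_div_distrib, Fin.prod_Iio_natCast_sub_eq_factorial, inv_mul_eq_div]
end

section
/- For every n ≥ 0, in the polynomial ring ℤ[x_0, …, x_n], the sum over all Gelfand–Tsetlin patterns (h_{i,j})_{0 ≤ j ≤ i ≤ n} with bottom row h_{n,j} = j (j = 0, …, n) of the monomial ∏_{i=0}^{n} x_i^{s_i − s_{i−1}}, where s_i = Σ_{j=0}^{i} h_{i,j} and s_{−1} = 0, equals the product ∏_{0 ≤ i < j ≤ n} (x_i + x_j). (This is the product formula for the Schur polynomial of the staircase partition (n, n−1, …, 1, 0) in n+1 variables, expressed via its Gelfand–Tsetlin expansion.) -/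
/-- `h` is a Gelfand–Tsetlin pattern of size `n+1`: a triangular array
`(h i j)_{0 ≤ j ≤ i ≤ n}` of nonnegative integers satisfying the interlacing conditions
`h i j ≤ h (i-1) j ≤ h i (j+1)` for `1 ≤ i ≤ n`, `0 ≤ j ≤ i-1`.
(Entries outside the triangle are normalized to `0`.) -/
def IsGTPattern (n : ℕ) (h : ℕ → ℕ → ℕ) : Prop :=
  (∀ i j, 1 ≤ i → i ≤ n → j ≤ i - 1 →
    h i j ≤ h (i - 1) j ∧ h (i - 1) j ≤ h i (j + 1)) ∧
  (∀ i j, ¬(j ≤ i ∧ i ≤ n) → h i j = 0)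

/-- `s_i`: the sum of the entries in row `i` of the triangular array `h`. -/
def rowSum (h : ℕ → ℕ → ℕ) (i : ℕ) : ℕ := ∑ j ∈ Finset.range (i + 1), h i j

/-- The weight of a Gelfand–Tsetlin pattern in `ℤ[x_0, …, x_n]`:
`∏_{i=0}^n x_i ^ (s_i - s_{i-1})`, where `s_{-1} = 0`. -/
noncomputable def gtWeight (n : ℕ) (h : ℕ → ℕ → ℕ) : MvPolynomial (Fin (n + 1)) ℤ :=
  ∏ i : Fin (n + 1),
    MvPolynomial.X i ^ (rowSum h (i : ℕ) - (if (i : ℕ) = 0 then 0 else rowSum h ((i : ℕ) - 1)))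

/-!
Multiplying the Gelfand–Tsetlin sum with bottom row `λ` by the Vandermonde determinant gives the
alternant `det (x_i ^ (λ_j + j))`. Induct on the number of rows: stripping the last row of a
pattern matches the branching rule for alternants, which comes from subtracting
`y ^ (e_{j+1} - e_j)` times each row of `det (x_i ^ e_j)` from the next one (`y` the last
variable), expanding along the column of `y`, and writing every remaining entry as
`(x_i - y)` times a geometric sum. For the staircase `λ_j = j` the alternant is the Vandermonde
determinant of the squares `x_i ^ 2`, and dividing by the Vandermonde determinant of the `x_i`
leaves `∏_{i<j} (x_i + x_j)`.
-/

open Finset Matrix MvPolynomial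

section Alternant

variable {R : Type*} [CommRing R]

theorem Matrix.det_of_sum_row {n ι : Type*} [Fintype n] [DecidableEq n]
    (A : n → Finset ι) (g : n → ι → n → R) :
    det (of fun j i => ∑ t ∈ A j, g j t i) =
      ∑ t ∈ Fintype.piFinset A, det (of fun j i => g j (t j) i) := by
  have hrows : (of fun j i => ∑ t ∈ A j, g j t i) = fun j => ∑ t ∈ A j, g j t := by
    ext j i
    simp [Finset.sum_apply]
  rw [hrows]
  exact detRowAlternating.map_sum_finset g A

noncomputable def alternant (x : ℕ → R) {k : ℕ} (e : Fin k → ℕ) : R :=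
  det (of fun j i : Fin k => x i ^ e j)

theorem alternant_succ (x : ℕ → R) {m : ℕ} (e : Fin (m + 2) → ℕ)
    (he : ∀ j : Fin (m + 1), e j.castSucc ≤ e j.succ) :
    alternant x e = (∏ i : Fin (m + 1), (x (m + 1) - x i)) *
      ∑ t ∈ Fintype.piFinset fun j : Fin (m + 1) => Ico (e j.castSucc) (e j.succ),
        x (m + 1) ^ (e 0 + ∑ j, (e j.succ - 1 - t j)) * alternant x t := by
  set y := x (m + 1)
  -- subtracting `y ^ (e (j+1) - e j)` times row `j` from row `j+1` clears the column of `y`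
  let B : Matrix (Fin (m + 2)) (Fin (m + 2)) R := of fun j i => Fin.cases (x i ^ e 0)
    (fun j => x i ^ e j.succ - x i ^ e j.castSucc * y ^ (e j.succ - e j.castSucc)) j
  have hB : alternant x e = det B :=
    det_eq_of_forall_row_eq_smul_add_pred (fun j => y ^ (e j.succ - e j.castSucc))
      (fun i => rfl) (fun j i => by simp [B]; ring)
  have hBlast : ∀ j : Fin (m + 1), B j.succ (Fin.last (m + 1)) = 0 := by
    intro j
    simp [B, y, ← pow_add, Nat.add_sub_cancel' (he j)]
  have hexpand : det B = (-1) ^ (m + 1) * y ^ e 0 * ((∏ i : Fin (m + 1), (x i - y)) *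
      det (of fun j i : Fin (m + 1) =>
        ∑ t ∈ Ico (e j.castSucc) (e j.succ), x i ^ t * y ^ (e j.succ - 1 - t))) := by
    rw [← det_mul_row, det_succ_column B (Fin.last _), Fin.sum_univ_succ]
    simp only [hBlast, mul_zero, zero_mul, sum_const_zero, add_zero]
    congr 2
    · simp
    · ext j i
      simp [B, mul_geom_sum₂_Ico _ _ (he j)]
  have hsign : (-1) ^ (m + 1) * ∏ i : Fin (m + 1), (x i - y) = ∏ i : Fin (m + 1), (y - x i) := by
    simp_rw [← neg_sub (x _) y, prod_neg, card_univ, Fintype.card_fin]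
  have hterm : ∀ t : Fin (m + 1) → ℕ,
      det (of fun j i : Fin (m + 1) => x i ^ t j * y ^ (e j.succ - 1 - t j)) =
        y ^ (∑ j, (e j.succ - 1 - t j)) * alternant x t := by
    intro t
    rw [← prod_pow_eq_pow_sum, alternant, ← det_mul_column]
    congr 1
    ext j i
    simp [mul_comm]
  rw [hB, hexpand, det_of_sum_row, ← hsign, mul_sum, mul_sum, mul_sum]
  refine sum_congr rfl fun t _ => ?_
  rw [hterm, pow_add]
  ring

theorem alternant_succ_range (x : ℕ → R) (m : ℕ) :
    alternant x (fun j : Fin (m + 2) => (j : ℕ)) =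
      (∏ i : Fin (m + 1), (x (m + 1) - x i)) * alternant x (fun j : Fin (m + 1) => (j : ℕ)) := by
  rw [alternant_succ x _ fun j => by simp]
  simp [Nat.Ico_succ_singleton, Fintype.piFinset_singleton]

theorem alternant_range_mul (x : ℕ → R) (k c : ℕ) :
    alternant x (fun j : Fin k => (j : ℕ) * c) = det (vandermonde fun i : Fin k => x i ^ c) := by
  rw [alternant, ← det_transpose]
  congr 1
  ext i j
  simp [vandermonde, ← pow_mul, mul_comm]

theorem alternant_range_add_range (x : ℕ → R) (k : ℕ) :
    alternant x (fun j : Fin k => (j : ℕ) + j) =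
      (∏ j : Fin k, ∏ i ∈ Iio j, (x i + x j)) * alternant x (fun j : Fin k => (j : ℕ)) := by
  have h2 := alternant_range_mul x k 2
  have h1 := alternant_range_mul x k 1
  simp only [mul_two, mul_one, pow_one] at h1 h2
  have hswap : ∏ j : Fin k, ∏ i ∈ Iio j, (x i + x j) = ∏ i : Fin k, ∏ j ∈ Ioi i, (x i + x j) :=
    prod_comm' (by simp)
  rw [h2, h1, det_vandermonde, det_vandermonde, hswap, ← prod_mul_distrib]
  refine prod_congr rfl fun i _ => ?_
  rw [← prod_mul_distrib]
  exact prod_congr rfl fun j _ => by ring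

theorem alternant_range_ne_zero [IsDomain R] {x : ℕ → R} {k : ℕ}
    (hx : Function.Injective fun i : Fin k => x i) :
    alternant x (fun j : Fin k => (j : ℕ)) ≠ 0 := by
  have h := alternant_range_mul x k 1
  simp only [mul_one, pow_one] at h
  rw [h]
  exact det_vandermonde_ne_zero_iff.mpr hx

def interlacingRows (m : ℕ) (r : ℕ → ℕ) : Finset (Fin (m + 1) → ℕ) :=
  Fintype.piFinset fun j => Icc (r j) (r (j + 1))

theorem mem_interlacingRows {m : ℕ} {r : ℕ → ℕ} {f : Fin (m + 1) → ℕ} :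
    f ∈ interlacingRows m r ↔ ∀ j : Fin (m + 1), r j ≤ f j ∧ f j ≤ r (j + 1) := by
  simp [interlacingRows]

theorem alternant_add_range_succ (x : ℕ → R) {m : ℕ} (r : ℕ → ℕ)
    (hr : ∀ j ≤ m, r j ≤ r (j + 1)) :
    alternant x (fun j : Fin (m + 2) => r j + j) = (∏ i : Fin (m + 1), (x (m + 1) - x i)) *
      ∑ f ∈ interlacingRows m r, x (m + 1) ^ (∑ j ∈ range (m + 2), r j - ∑ j, f j) *
        alternant x (fun j : Fin (m + 1) => f j + j) := by
  rw [alternant_succ x _ fun j => by simpa using Nat.add_le_add (hr j (by omega)) (Nat.le_succ j)]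
  congr 1
  -- shifting by `j` turns `Icc (r j) (r (j + 1))` into `Ico (e j) (e (j + 1))`, `e j = r j + j`
  refine (sum_nbij' (fun (f : Fin (m + 1) → ℕ) j => f j + (j : ℕ))
    (fun (t : Fin (m + 1) → ℕ) j => t j - j) (fun f hf => ?_) (fun t ht => ?_)
    (fun f _ => by simp) (fun t ht => ?_) (fun f hf => ?_)).symm
  all_goals simp only [mem_interlacingRows, Fintype.mem_piFinset, mem_Ico, Fin.val_castSucc,
    Fin.val_succ] at *
  · exact fun j => by have := hf j; omega
  · exact fun j => by have := ht j; omega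
  · exact funext fun j => by have := ht j; omega
  · have hsum : ∑ j ∈ range (m + 2), r j = r 0 + ∑ j : Fin (m + 1), r (j + 1) := by
      rw [sum_range_succ', Fin.sum_univ_eq_sum_range (fun j => r (j + 1)), add_comm]
    have hle : ∑ j, f j ≤ ∑ j : Fin (m + 1), r (j + 1) := sum_le_sum fun j _ => (hf j).2
    have htsub : ∑ j : Fin (m + 1), (r (j + 1) + (j + 1) - 1 - (f j + j)) =
        ∑ j : Fin (m + 1), r (j + 1) - ∑ j, f j := by
      rw [← sum_tsub_distrib _ fun j _ => (hf j).2]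
      exact sum_congr rfl fun j _ => by omega
    simp only [Fin.val_zero, add_zero, htsub, hsum]
    congr 2
    omega

end Alternant

def addRow (k : ℕ) (r : ℕ → ℕ) (g : ℕ → ℕ → ℕ) : ℕ → ℕ → ℕ :=
  Function.update g k fun j => if j ≤ k then r j else 0

@[simp] theorem addRow_self (k : ℕ) (r : ℕ → ℕ) (g : ℕ → ℕ → ℕ) (j : ℕ) :
    addRow k r g k j = if j ≤ k then r j else 0 := by
  simp [addRow]

@[simp] theorem addRow_of_ne {k i : ℕ} (h : i ≠ k) (r : ℕ → ℕ) (g : ℕ → ℕ → ℕ) (j : ℕ) :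
    addRow k r g i j = g i j := by
  simp [addRow, h]

theorem addRow_congr {k : ℕ} {r r' : ℕ → ℕ} (h : ∀ j ≤ k, r j = r' j) (g : ℕ → ℕ → ℕ) :
    addRow k r g = addRow k r' g := by
  ext i j
  by_cases hi : i = k
  · subst hi
    by_cases hj : j ≤ i <;> simp [hj, h]
  · simp [hi]

theorem addRow_injOn (k : ℕ) (r : ℕ → ℕ) : Set.InjOn (addRow k r) {g | g k = 0} := by
  intro g₁ h₁ g₂ h₂ h
  ext i j
  by_cases hi : i = k
  · subst hi
    simp_all
  · simpa [hi] using congrFun (congrFun h i) j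

theorem IsGTPattern.addRow_update_self {k : ℕ} {g : ℕ → ℕ → ℕ} (hg : IsGTPattern k g) :
    addRow k (g k) (Function.update g k 0) = g := by
  ext i j
  by_cases hi : i = k
  · subst hi
    by_cases hj : j ≤ i
    · simp [hj]
    · simp [hj, hg.2 i j (by omega)]
  · simp [hi]

theorem isGTPattern_addRow_zero (r : ℕ → ℕ) : IsGTPattern 0 (addRow 0 r 0) := by
  refine ⟨fun i j h₁ h₂ => by omega, fun i j hij => ?_⟩
  by_cases hi : i = 0
  · subst hi
    simp only [addRow_self]
    split_ifs <;> omega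
  · simp [hi]

theorem IsGTPattern.update_zero_eq_zero {g : ℕ → ℕ → ℕ} (hg : IsGTPattern 0 g) :
    Function.update g 0 0 = 0 := by
  ext i j
  by_cases hi : i = 0
  · simp [hi]
  · simp [hi, hg.2 i j (by omega)]

theorem IsGTPattern.addRow_succ {m : ℕ} {g : ℕ → ℕ → ℕ} {r : ℕ → ℕ} (hg : IsGTPattern m g)
    (hr : ∀ j ≤ m, r j ≤ g m j ∧ g m j ≤ r (j + 1)) : IsGTPattern (m + 1) (addRow (m + 1) r g) := by
  refine ⟨fun i j h₁ h₂ hj => ?_, fun i j hij => ?_⟩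
  · by_cases hi : i = m + 1
    · subst hi
      simpa [show j ≤ m by omega, show j ≤ m + 1 by omega] using hr j (by omega)
    · simpa [hi, show i - 1 ≠ m + 1 by omega] using hg.1 i j h₁ (by omega) hj
  · by_cases hi : i = m + 1
    · subst hi
      simp only [addRow_self]
      rw [if_neg (by omega)]
    · simpa [hi] using hg.2 i j (by omega)

theorem IsGTPattern.update_succ {m : ℕ} {g : ℕ → ℕ → ℕ} (hg : IsGTPattern (m + 1) g) :
    IsGTPattern m (Function.update g (m + 1) 0) := by
  refine ⟨fun i j h₁ h₂ hj => ?_, fun i j hij => ?_⟩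
  · simpa [show i ≠ m + 1 by omega, show i - 1 ≠ m + 1 by omega] using hg.1 i j h₁ (by omega) hj
  · by_cases hi : i = m + 1
    · simp [hi]
    · simpa [hi] using hg.2 i j (by omega)

-- `Fin.ofNat` reads an interlacing row on all of `ℕ`; only its entries at `j ≤ m` matter.
open Classical in
noncomputable def gtPatterns : ℕ → (ℕ → ℕ) → Finset (ℕ → ℕ → ℕ)
  | 0, r => {addRow 0 r 0}
  | m + 1, r =>
    ((interlacingRows m r).sigma fun f => gtPatterns m fun j => f (Fin.ofNat (m + 1) j)).image
      fun p => addRow (m + 1) r p.2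

theorem mem_gtPatterns {m : ℕ} {r : ℕ → ℕ} {g : ℕ → ℕ → ℕ} :
    g ∈ gtPatterns m r ↔ IsGTPattern m g ∧ ∀ j ≤ m, g m j = r j := by
  induction m generalizing r g with
  | zero =>
    simp only [gtPatterns, mem_singleton, nonpos_iff_eq_zero, forall_eq]
    constructor
    · rintro rfl
      exact ⟨isGTPattern_addRow_zero r, by simp⟩
    · rintro ⟨hg, hg0⟩
      rw [← hg.addRow_update_self, hg.update_zero_eq_zero]
      exact addRow_congr (by simpa using hg0) 0
  | succ m ih =>
    simp only [gtPatterns, mem_image, mem_sigma, ih, mem_interlacingRows, Sigma.exists]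
    constructor
    · rintro ⟨f, g', ⟨hf, hg', hbot⟩, rfl⟩
      refine ⟨hg'.addRow_succ fun j hj => ?_, fun j hj => by simp [hj]⟩
      simpa [hbot j hj, Nat.mod_eq_of_lt (show j < m + 1 by omega)] using hf (Fin.ofNat (m + 1) j)
    · rintro ⟨hg, hbot⟩
      refine ⟨fun j => g m j, Function.update g (m + 1) 0, ⟨fun j => ?_, hg.update_succ,
        fun j hj => ?_⟩, ?_⟩
      · simpa [← hbot j (by omega), ← hbot (j + 1) (by omega)] using
          hg.1 (m + 1) j (by omega) le_rfl (by simp; omega)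
      · simp [Nat.mod_eq_of_lt (show j < m + 1 by omega)]
      · rw [← addRow_congr hbot, hg.addRow_update_self]

theorem rowSum_addRow (k : ℕ) (r : ℕ → ℕ) (g : ℕ → ℕ → ℕ) (i : ℕ) :
    rowSum (addRow k r g) i = if i = k then ∑ j ∈ range (k + 1), r j else rowSum g i := by
  split_ifs with hi
  · subst hi
    exact sum_congr rfl fun j hj => by simp [Nat.lt_succ_iff.mp (mem_range.mp hj)]
  · simp [rowSum, hi]

theorem gtWeight_addRow_zero (n : ℕ) (r : ℕ → ℕ) : gtWeight n (addRow 0 r 0) = X 0 ^ r 0 := by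
  rw [gtWeight, Fintype.prod_eq_single 0 fun i hi => ?_]
  · simp [rowSum_addRow]
  · have hi' : (i : ℕ) ≠ 0 := Fin.val_ne_zero_iff.mpr hi
    simp [hi', rowSum]

theorem gtWeight_addRow_succ {n m : ℕ} (hm : m + 1 ≤ n) (r : ℕ → ℕ) {g : ℕ → ℕ → ℕ}
    (hg : ∀ i, m < i → ∀ j, g i j = 0) :
    gtWeight n (addRow (m + 1) r g) =
      X ⟨m + 1, by omega⟩ ^ (∑ j ∈ range (m + 2), r j - rowSum g m) * gtWeight n g := by
  have hrow : ∀ i, m < i → rowSum g i = 0 := fun i hi => sum_eq_zero fun j _ => hg i hi j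
  set M : Fin (n + 1) := ⟨m + 1, by omega⟩
  rw [gtWeight, gtWeight, Fintype.prod_eq_mul_prod_compl M, Fintype.prod_eq_mul_prod_compl M,
    ← mul_assoc]
  congr 1
  · simp [M, rowSum_addRow, hrow]
  · refine prod_congr rfl fun i hi => ?_
    have hi' : (i : ℕ) ≠ m + 1 := fun h => (mem_compl.mp hi) (mem_singleton.mpr (Fin.ext h))
    congr 1
    simp only [rowSum_addRow, hi', if_false]
    split_ifs <;> simp_all

theorem sum_gtWeight_gtPatterns_zero (n : ℕ) (r : ℕ → ℕ) :
    ∑ g ∈ gtPatterns 0 r, gtWeight n g = X 0 ^ r 0 := by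
  simp [gtPatterns, gtWeight_addRow_zero]

theorem rowSum_eq_sum_fin (g : ℕ → ℕ → ℕ) (m : ℕ) : rowSum g m = ∑ j : Fin (m + 1), g m j :=
  (Fin.sum_univ_eq_sum_range (g m) (m + 1)).symm

open Classical in
theorem sum_gtWeight_gtPatterns_succ {n m : ℕ} (hm : m + 1 ≤ n) (r : ℕ → ℕ) :
    ∑ g ∈ gtPatterns (m + 1) r, gtWeight n g =
      ∑ f ∈ interlacingRows m r, X ⟨m + 1, by omega⟩ ^ (∑ j ∈ range (m + 2), r j - ∑ j, f j) *
        ∑ g ∈ gtPatterns m (fun j => f (Fin.ofNat (m + 1) j)), gtWeight n g := by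
  rw [gtPatterns, sum_image, sum_sigma]
  · refine sum_congr rfl fun f _ => ?_
    rw [mul_sum]
    refine sum_congr rfl fun g hg => ?_
    obtain ⟨hgp, hbot⟩ := mem_gtPatterns.mp hg
    rw [gtWeight_addRow_succ hm r fun i hi j => hgp.2 i j (by omega), rowSum_eq_sum_fin]
    simp [hbot _ (Fin.is_le _)]
  · intro p hp q hq h
    simp only [coe_sigma, Set.mem_sigma_iff, mem_coe, mem_gtPatterns] at hp hq
    have h2 : p.2 = q.2 :=
      addRow_injOn _ _ (funext (hp.2.1.2 _ · (by omega))) (funext (hq.2.1.2 _ · (by omega))) h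
    have h1 : p.1 = q.1 := funext fun j => by
      simpa [hp.2.2 j (Fin.is_le j), hq.2.2 j (Fin.is_le j)] using congrFun (congrFun h2 m) j
    exact Sigma.ext h1 (heq_of_eq h2)

noncomputable def natX (n i : ℕ) : MvPolynomial (Fin (n + 1)) ℤ :=
  if h : i < n + 1 then X ⟨i, h⟩ else 0

@[simp] theorem natX_val (n : ℕ) (i : Fin (n + 1)) : natX n i = X i := by
  simp [natX, i.isLt]

theorem sum_gtWeight_mul_alternant {n m : ℕ} (hm : m ≤ n) (r : ℕ → ℕ)
    (hr : ∀ j < m, r j ≤ r (j + 1)) :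
    (∑ g ∈ gtPatterns m r, gtWeight n g) * alternant (natX n) (fun j : Fin (m + 1) => (j : ℕ)) =
      alternant (natX n) (fun j : Fin (m + 1) => r j + j) := by
  induction m generalizing r with
  | zero => simp [sum_gtWeight_gtPatterns_zero, alternant, natX]
  | succ m ih =>
    rw [sum_gtWeight_gtPatterns_succ hm, alternant_succ_range,
      alternant_add_range_succ _ _ fun j hj => hr j (by omega), sum_mul, mul_sum]
    refine sum_congr rfl fun f hf => ?_
    set f' : ℕ → ℕ := fun j => f (Fin.ofNat (m + 1) j)
    have hf' : ∀ j ≤ m, r j ≤ f' j ∧ f' j ≤ r (j + 1) := fun j hj => by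
      simpa [f', Nat.mod_eq_of_lt (show j < m + 1 by omega)] using
        mem_interlacingRows.mp hf (.ofNat _ j)
    have hmono : ∀ j < m, f' j ≤ f' (j + 1) := fun j hj =>
      (hf' j (by omega)).2.trans (hf' (j + 1) (by omega)).1
    have hrow : alternant (natX n) (fun j : Fin (m + 1) => f' j + j) =
        alternant (natX n) (fun j => f j + j) := by
      simp [f']
    have hy : natX n (m + 1) = X ⟨m + 1, by omega⟩ := by simp [natX, show m + 1 < n + 1 by omega]
    rw [← hrow, ← ih (by omega) _ hmono, hy]
    ring

/-- The Gelfand–Tsetlin expansion of the Schur polynomial of the staircase partition: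
the sum, over all Gelfand–Tsetlin patterns of size `n+1` with bottom row `h n j = j`,
of the weights `∏ᵢ x_i^(s_i - s_{i-1})` equals `∏_{0 ≤ i < j ≤ n} (x_i + x_j)`
in `ℤ[x_0, …, x_n]`. -/
theorem stmt6 (n : ℕ) (S : Finset (ℕ → ℕ → ℕ))
    (hS : ∀ h, h ∈ S ↔ IsGTPattern n h ∧ ∀ j, j ≤ n → h n j = j) :
    ∑ h ∈ S, gtWeight n h =
      ∏ j : Fin (n + 1), ∏ i ∈ Finset.Iio j,
        (MvPolynomial.X i + MvPolynomial.X j) := by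
  have hS : S = gtPatterns n (fun j => j) := ext fun g => (hS g).trans mem_gtPatterns.symm
  have hV : alternant (natX n) (fun j : Fin (n + 1) => (j : ℕ)) ≠ 0 :=
    alternant_range_ne_zero (by simpa using X_injective)
  refine mul_right_cancel₀ hV ?_
  rw [hS, sum_gtWeight_mul_alternant le_rfl _ fun j _ => j.le_succ, alternant_range_add_range]
  simp
end

section
/- For every n ≥ 0, every staircase tableau g ∈ ST(n), and every family of bits ξ = (ξ_{i,j})_{(i,j) ∈ I_n} with values in {0,1}, the output A(g, ξ) of the half-hexagon domino shuffle is a staircase tableau of order n+1, i.e. A(g, ξ) ∈ ST(n+1). -/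
/-- `g` is a staircase tableau of order `n`: a triangular array `(g i j)_{0 ≤ j ≤ i ≤ n}`
of positive integers satisfying the interlacing conditions
`g i j ≤ g (i-1) j < g i (j+1)` for `1 ≤ i ≤ n`, `0 ≤ j ≤ i-1`, with fixed bottom row
`g n j = 2j + 1`.  (Entries outside the triangle are normalized to `0`.) -/
def IsStaircaseTableau (n : ℕ) (g : ℕ → ℕ → ℕ) : Prop :=
  (∀ i j, j ≤ i → i ≤ n → 1 ≤ g i j) ∧
  (∀ i j, 1 ≤ i → i ≤ n → j ≤ i - 1 →
    g i j ≤ g (i - 1) j ∧ g (i - 1) j < g i (j + 1)) ∧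
  (∀ j, j ≤ n → g n j = 2 * j + 1) ∧
  (∀ i j, ¬(j ≤ i ∧ i ≤ n) → g i j = 0)

/-- One row of the half-hexagon domino shuffle: given the input tableau `g`, the bits
`ξ`, and the already-computed previous output row `prev` (row `i - 1`), compute entry
`j` of output row `i`. -/
def shuffleRow (g : ℕ → ℕ → ℕ) (ξ : ℕ → ℕ → Bool) (prev : ℕ → ℕ) (i j : ℕ) : ℕ :=
  if j < i ∧ g i j = prev j then g i j
  else if 0 < j ∧ g i j = prev (j - 1) then g i j + 1
  else g i j + (if ξ i j then 1 else 0)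

/-- The output rows `0, 1, …` of the half-hexagon domino shuffle, computed top-down. -/
def shuffleRows (g : ℕ → ℕ → ℕ) (ξ : ℕ → ℕ → Bool) : ℕ → ℕ → ℕ
  | 0 => shuffleRow g ξ (fun _ => 0) 0
  | i + 1 => shuffleRow g ξ (shuffleRows g ξ i) (i + 1)

/-- The half-hexagon domino shuffle `A(g, ξ)`: from a staircase tableau `g` of order `n`
and bits `ξ`, produce a triangular array of order `n + 1` by processing rows
`i = 0, …, n` top-down (entry `j` of row `i` is `g i j` if `j < i` and
`g i j = h (i-1) j`; else `g i j + 1` if `j > 0` and `g i j = h (i-1) (j-1)`; else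
`g i j + ξ i j`), and appending the deterministic row `h (n+1) j = 2j + 1`.
(Entries outside the triangle are normalized to `0`.) -/
def HHShuffle (n : ℕ) (g : ℕ → ℕ → ℕ) (ξ : ℕ → ℕ → Bool) : ℕ → ℕ → ℕ :=
  fun i j =>
    if j ≤ i ∧ i ≤ n + 1 then
      (if i = n + 1 then 2 * j + 1 else shuffleRows g ξ i j)
    else 0

lemma shuffleRow_range (g : ℕ → ℕ → ℕ) (ξ : ℕ → ℕ → Bool) (prev : ℕ → ℕ) (i j : ℕ) :
    shuffleRow g ξ prev i j = g i j ∨ shuffleRow g ξ prev i j = g i j + 1 := by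
  unfold shuffleRow
  split_ifs <;> cases ξ i j <;> simp

lemma shuffleRows_range (g : ℕ → ℕ → ℕ) (ξ : ℕ → ℕ → Bool) (i j : ℕ) :
    shuffleRows g ξ i j = g i j ∨ shuffleRows g ξ i j = g i j + 1 := by
  cases i with
  | zero => exact shuffleRow_range g ξ _ 0 j
  | succ k => exact shuffleRow_range g ξ _ (k+1) j

lemma shuffleRows_succ (g : ℕ → ℕ → ℕ) (ξ : ℕ → ℕ → Bool) (k j : ℕ) :
    shuffleRows g ξ (k+1) j = shuffleRow g ξ (shuffleRows g ξ k) (k+1) j := rfl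

lemma key (n : ℕ) (g : ℕ → ℕ → ℕ) (hg : IsStaircaseTableau n g) (ξ : ℕ → ℕ → Bool) :
    ∀ i, i ≤ n →
      ∀ j, j + 1 ≤ i →
        (shuffleRows g ξ i j < shuffleRows g ξ i (j+1)) ∧
        shuffleRows g ξ i j ≤ shuffleRows g ξ (i-1) j ∧
        shuffleRows g ξ (i-1) j < shuffleRows g ξ i (j+1) := by
  intro i
  induction i with
  | zero => intro _ j hj; omega
  | succ k ih =>
    intro hk j hj
    have hgi := hg.2.1 (k+1) j (by omega) hk (by omega)
    simp only [Nat.add_sub_cancel] at hgi ⊢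
    have hpj := shuffleRows_range g ξ k j
    have h1 : shuffleRows g ξ (k+1) j ≤ shuffleRows g ξ k j := by
      rw [shuffleRows_succ]
      unfold shuffleRow
      by_cases hA : j < k + 1 ∧ g (k+1) j = shuffleRows g ξ k j
      · rw [if_pos hA]; omega
      · rw [if_neg hA]
        have hne : g (k+1) j ≠ shuffleRows g ξ k j := fun h => hA ⟨by omega, h⟩
        have ht : (if ξ (k+1) j then (1:ℕ) else 0) ≤ 1 := by split <;> simp
        by_cases hB : 0 < j ∧ g (k+1) j = shuffleRows g ξ k (j - 1)
        · rw [if_pos hB]; omega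
        · rw [if_neg hB]; omega
    have h2 : shuffleRows g ξ k j < shuffleRows g ξ (k+1) (j+1) := by
      rw [shuffleRows_succ]
      unfold shuffleRow
      simp only [Nat.add_sub_cancel]
      by_cases hA : j + 1 < k + 1 ∧ g (k+1) (j+1) = shuffleRows g ξ k (j+1)
      · rw [if_pos hA]
        have hmono : shuffleRows g ξ k j < shuffleRows g ξ k (j+1) :=
          (ih (by omega) j (by omega)).1
        omega
      · rw [if_neg hA]
        by_cases hB : 0 < j + 1 ∧ g (k+1) (j+1) = shuffleRows g ξ k j
        · rw [if_pos hB]; omega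
        · rw [if_neg hB]
          have hne : g (k+1) (j+1) ≠ shuffleRows g ξ k j := fun h => hB ⟨by omega, h⟩
          have ht : (if ξ (k+1) (j+1) then (1:ℕ) else 0) ≤ 1 := by split <;> simp
          omega
    exact ⟨lt_of_le_of_lt h1 h2, h1, h2⟩

lemma HHShuffle_eq_shuffle {n i j : ℕ} (g : ℕ → ℕ → ℕ) (ξ : ℕ → ℕ → Bool)
    (h1 : j ≤ i) (h2 : i ≤ n) :
    HHShuffle n g ξ i j = shuffleRows g ξ i j := by
  unfold HHShuffle
  rw [if_pos ⟨h1, by omega⟩, if_neg (by omega)]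

lemma HHShuffle_top {n j : ℕ} (g : ℕ → ℕ → ℕ) (ξ : ℕ → ℕ → Bool) (h1 : j ≤ n + 1) :
    HHShuffle n g ξ (n+1) j = 2 * j + 1 := by
  unfold HHShuffle
  rw [if_pos ⟨h1, le_refl _⟩, if_pos rfl]

/-- For every staircase tableau `g` of order `n` and every family of bits `ξ`, the
output of the half-hexagon domino shuffle is a staircase tableau of order `n + 1`. -/
theorem stmt7 (n : ℕ) (g : ℕ → ℕ → ℕ) (hg : IsStaircaseTableau n g)
    (ξ : ℕ → ℕ → Bool) : IsStaircaseTableau (n + 1) (HHShuffle n g ξ) := by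
  refine ⟨?_, ?_, ?_, ?_⟩
  · intro i j hji hin
    by_cases hi : i = n + 1
    · subst hi; rw [HHShuffle_top g ξ hji]; omega
    · rw [HHShuffle_eq_shuffle g ξ hji (by omega)]
      have := shuffleRows_range g ξ i j
      have := hg.1 i j hji (by omega)
      omega
  · intro i j hi1 hin hj
    by_cases hi : i = n + 1
    · subst hi
      simp only [Nat.add_sub_cancel]
      rw [HHShuffle_top g ξ (by omega), HHShuffle_top g ξ (by omega),
        HHShuffle_eq_shuffle g ξ (by omega) le_rfl]
      have hr := shuffleRows_range g ξ n j
      have hb := hg.2.2.1 j (by omega)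
      omega
    · rw [HHShuffle_eq_shuffle g ξ (by omega) (by omega),
        HHShuffle_eq_shuffle g ξ (by omega) (by omega),
        HHShuffle_eq_shuffle g ξ (by omega) (by omega)]
      have hk := key n g hg ξ i (by omega) j (by omega)
      exact ⟨hk.2.1, hk.2.2⟩
  · intro j hj
    exact HHShuffle_top g ξ hj
  · intro i j h
    unfold HHShuffle
    rw [if_neg h]
end

section
/- For every n ≥ 0, every g ∈ ST(n), and every h ∈ ST(n+1), the number of bit families ξ ∈ {0,1}^{I_n} such that A(g, ξ) = h equals the number of bit families ξ' ∈ {0,1}^{I_{n−1}} such that A'(h, ξ') = g. (Equivalently, the forward transition probability from g to h under independent fair bits equals 2^{−(n+1)} times the backward transition probability from h to g, i.e. the forward and time-reversed shuffles are adjoint up to the factor 2^{n+1} = |ST(n+1)|/|ST(n)|.) -/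
/-- One row of the time-reversed half-hexagon domino shuffle: given the input tableau
`g`, the bits `ξ`, and the already-computed output row `prev` (row `i + 1`), compute
entry `j` of output row `i`. -/
def revRow (g : ℕ → ℕ → ℕ) (ξ : ℕ → ℕ → Bool) (prev : ℕ → ℕ) (i j : ℕ) : ℕ :=
  if g i j = prev j then g i j
  else if g i j = prev (j + 1) then g i j - 1
  else g i j - (if ξ i j then 1 else 0)

/-- The output rows of the time-reversed half-hexagon shuffle, computed bottom-up:
`revRows n g ξ k` is output row `n - k`. -/
def revRows (n : ℕ) (g : ℕ → ℕ → ℕ) (ξ : ℕ → ℕ → Bool) : ℕ → ℕ → ℕ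
  | 0 => fun j => 2 * j + 1
  | k + 1 => revRow g ξ (revRows n g ξ k) (n - (k + 1))

/-- The time-reversed half-hexagon domino shuffle `A'(g, ξ)`: from a staircase tableau
`g` of order `n + 1` and bits `ξ`, produce a triangular array of order `n` by first
setting row `n` to `h n j = 2j + 1` and then processing rows `i = n-1, …, 0` bottom-up
(entry `j` of row `i` is `g i j` if `g i j = h (i+1) j`; else `g i j - 1` if
`g i j = h (i+1) (j+1)`; else `g i j - ξ i j`).
(Entries outside the triangle are normalized to `0`.) -/
def HHRevShuffle (n : ℕ) (g : ℕ → ℕ → ℕ) (ξ : ℕ → ℕ → Bool) : ℕ → ℕ → ℕ :=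
  fun i j => if j ≤ i ∧ i ≤ n then revRows n g ξ (n - i) j else 0

private lemma shuffleRow_congr (g : ℕ → ℕ → ℕ) (ξ : ℕ → ℕ → Bool) (p p' : ℕ → ℕ)
    (i j : ℕ) (hj : j ≤ i) (hp : ∀ k, k < i → p k = p' k) :
    shuffleRow g ξ p i j = shuffleRow g ξ p' i j := by
  unfold shuffleRow
  rcases eq_or_lt_of_le hj with rfl | hlt
  · simp only [lt_irrefl, false_and, if_false]
    rcases Nat.eq_zero_or_pos j with rfl | hj0
    · simp
    · rw [hp (j - 1) (by omega)]
  · rw [hp j hlt, hp (j - 1) (by omega)]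

private lemma revRow_congr (h : ℕ → ℕ → ℕ) (ξ : ℕ → ℕ → Bool) (p p' : ℕ → ℕ)
    (i j : ℕ) (hj : j ≤ i) (hp : ∀ k, k ≤ i + 1 → p k = p' k) :
    revRow h ξ p i j = revRow h ξ p' i j := by
  unfold revRow
  rw [hp j (by omega), hp (j + 1) (by omega)]

private lemma hh_rows (n : ℕ) (g h : ℕ → ℕ → ℕ) (ξ : ℕ → ℕ → Bool)
    (heq : HHShuffle n g ξ = h) {i j : ℕ} (hi : i ≤ n) (hj : j ≤ i) :
    shuffleRows g ξ i j = h i j := by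
  have hthis := congrFun (congrFun heq i) j
  unfold HHShuffle at hthis
  rw [if_pos ⟨hj, by omega⟩, if_neg (by omega)] at hthis
  exact hthis

private lemma S_iff (n : ℕ) (g h : ℕ → ℕ → ℕ)
    (hbot : ∀ j, j ≤ n + 1 → h (n + 1) j = 2 * j + 1)
    (hzero : ∀ i j, ¬(j ≤ i ∧ i ≤ n + 1) → h i j = 0) (ξ : ℕ → ℕ → Bool) :
    HHShuffle n g ξ = h ↔
      ∀ i j, i ≤ n → j ≤ i → shuffleRow g ξ (h (i - 1)) i j = h i j := by
  constructor
  · intro heq i j hi hj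
    have key : shuffleRow g ξ (h (i - 1)) i j = shuffleRows g ξ i j := by
      cases i with
      | zero =>
        show _ = shuffleRow g ξ (fun _ => 0) 0 j
        exact shuffleRow_congr g ξ _ _ 0 j hj (fun k hk => absurd hk (Nat.not_lt_zero k))
      | succ k =>
        show shuffleRow g ξ (h k) (k + 1) j = shuffleRow g ξ (shuffleRows g ξ k) (k + 1) j
        exact shuffleRow_congr g ξ _ _ (k + 1) j hj
          (fun m hm => (hh_rows n g h ξ heq (by omega) (by omega)).symm)
    rw [key]; exact hh_rows n g h ξ heq hi hj
  · intro hF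
    have main : ∀ i, i ≤ n → ∀ j, j ≤ i → shuffleRows g ξ i j = h i j := by
      intro i
      induction i with
      | zero =>
        intro _ j hj
        rw [← hF 0 j (by omega) hj]
        show shuffleRow g ξ (fun _ => 0) 0 j = _
        exact shuffleRow_congr g ξ _ _ 0 j hj (fun k hk => absurd hk (Nat.not_lt_zero k))
      | succ k ih =>
        intro hk j hj
        rw [← hF (k + 1) j hk hj]
        show shuffleRow g ξ (shuffleRows g ξ k) (k + 1) j = shuffleRow g ξ (h k) (k + 1) j
        exact shuffleRow_congr g ξ _ _ (k + 1) j hj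
          (fun m hm => ih (by omega) m (by omega))
    funext i j
    unfold HHShuffle
    by_cases hij : j ≤ i ∧ i ≤ n + 1
    · rw [if_pos hij]
      by_cases hi : i = n + 1
      · subst hi; rw [if_pos rfl, hbot j hij.1]
      · rw [if_neg hi]; exact main i (by omega) j hij.1
    · rw [if_neg hij, hzero i j hij]

private lemma hrev_rows (n : ℕ) (h g : ℕ → ℕ → ℕ) (ξ' : ℕ → ℕ → Bool)
    (heq : HHRevShuffle n h ξ' = g) {i j : ℕ} (hi : i ≤ n) (hj : j ≤ i) :
    revRows n h ξ' (n - i) j = g i j := by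
  have hthis := congrFun (congrFun heq i) j
  unfold HHRevShuffle at hthis
  rwa [if_pos ⟨hj, hi⟩] at hthis

private lemma T_iff (n : ℕ) (h g : ℕ → ℕ → ℕ)
    (gbot : ∀ j, j ≤ n → g n j = 2 * j + 1)
    (gzero : ∀ i j, ¬(j ≤ i ∧ i ≤ n) → g i j = 0) (ξ' : ℕ → ℕ → Bool) :
    HHRevShuffle n h ξ' = g ↔
      ∀ i j, i < n → j ≤ i → revRow h ξ' (g (i + 1)) i j = g i j := by
  constructor
  · intro heq i j hi hj
    obtain ⟨k, hk⟩ : ∃ k, n - i = k + 1 := ⟨n - i - 1, by omega⟩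
    have h1 : revRows n h ξ' (n - i) j = g i j := hrev_rows n h g ξ' heq (by omega) hj
    rw [hk] at h1
    have h2 : n - (k + 1) = i := by omega
    have h3 : revRows n h ξ' (k + 1) j = revRow h ξ' (revRows n h ξ' k) i j := by
      show revRow h ξ' (revRows n h ξ' k) (n - (k + 1)) j = _
      rw [h2]
    rw [h3] at h1
    rw [← h1]
    refine revRow_congr h ξ' _ _ i j hj (fun m hm => ?_)
    have hk2 : k = n - (i + 1) := by omega
    rw [hk2]
    exact (hrev_rows n h g ξ' heq (by omega) hm).symm
  · intro hF
    have main : ∀ k, k ≤ n → ∀ j, j ≤ n - k → revRows n h ξ' k j = g (n - k) j := by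
      intro k
      induction k with
      | zero =>
        intro _ j hj
        show 2 * j + 1 = g (n - 0) j
        simp only [Nat.sub_zero] at hj ⊢
        exact (gbot j hj).symm
      | succ m ih =>
        intro hk j hj
        show revRow h ξ' (revRows n h ξ' m) (n - (m + 1)) j = g (n - (m + 1)) j
        have hi1 : (n - (m + 1)) + 1 = n - m := by omega
        have step := revRow_congr h ξ' (revRows n h ξ' m) (g ((n - (m + 1)) + 1))
          (n - (m + 1)) j hj
          (fun l hl => by
            rw [hi1]
            exact ih (by omega) l (by omega))
        rw [step]
        exact hF (n - (m + 1)) j (by omega) hj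
    funext i j
    unfold HHRevShuffle
    by_cases hij : j ≤ i ∧ i ≤ n
    · rw [if_pos hij]
      have := main (n - i) (by omega) j (by omega)
      rwa [show n - (n - i) = i by omega] at this
    · rw [if_neg hij, gzero i j hij]

private def Phi (n : ℕ) (g h : ℕ → ℕ → ℕ) (ξ : ℕ → ℕ → Bool) : ℕ → ℕ → Bool :=
  fun i j =>
    if j ≤ i ∧ i < n then
      (if h i j = g (i + 1) j then ξ (i + 1) j
       else if h i j = g (i + 1) (j + 1) then ξ (i + 1) (j + 1)
       else decide (h i j = g i j + 1))
    else false

private def Psi (n : ℕ) (g h : ℕ → ℕ → ℕ) (ξ' : ℕ → ℕ → Bool) : ℕ → ℕ → Bool :=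
  fun i j =>
    if j ≤ i ∧ i ≤ n then
      (if j < i ∧ g i j = h (i - 1) j then ξ' (i - 1) j
       else if 0 < j ∧ g i j = h (i - 1) (j - 1) then ξ' (i - 1) (j - 1)
       else decide (h i j = g i j + 1))
    else false

/-- For every `g ∈ ST(n)` and `h ∈ ST(n+1)`, the number of bit families
`ξ ∈ {0,1}^{I_n}` (encoded as `ξ : ℕ → ℕ → Bool` vanishing off
`I_n = {(i,j) : 0 ≤ j ≤ i ≤ n}`) with `A(g, ξ) = h` equals the number of bit families
`ξ' ∈ {0,1}^{I_{n-1}}` (encoded as `ξ' : ℕ → ℕ → Bool` vanishing off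
`I_{n-1} = {(i,j) : 0 ≤ j ≤ i < n}`) with `A'(h, ξ') = g`. -/
theorem stmt9 (n : ℕ) (g h : ℕ → ℕ → ℕ)
    (hg : IsStaircaseTableau n g) (hh : IsStaircaseTableau (n + 1) h) :
    {ξ : ℕ → ℕ → Bool | (∀ i j, ¬(j ≤ i ∧ i ≤ n) → ξ i j = false) ∧
        HHShuffle n g ξ = h}.ncard =
      {ξ' : ℕ → ℕ → Bool | (∀ i j, ¬(j ≤ i ∧ i < n) → ξ' i j = false) ∧
        HHRevShuffle n h ξ' = g}.ncard := by
  classical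
  obtain ⟨gpos, gint, gbot, gzero⟩ := hg
  obtain ⟨hpos, hint, hbot, hzero⟩ := hh
  set Sset : Set (ℕ → ℕ → Bool) :=
    {ξ : ℕ → ℕ → Bool | (∀ i j, ¬(j ≤ i ∧ i ≤ n) → ξ i j = false) ∧
        HHShuffle n g ξ = h} with hSset
  set Tset : Set (ℕ → ℕ → Bool) :=
    {ξ' : ℕ → ℕ → Bool | (∀ i j, ¬(j ≤ i ∧ i < n) → ξ' i j = false) ∧
        HHRevShuffle n h ξ' = g} with hTset
  -- basic strictness / monotonicity facts
  have grs : ∀ i j, 1 ≤ i → i ≤ n → 1 ≤ j → j ≤ i → g i (j - 1) < g i j := by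
    intro i j h1 h2 h3 h4
    have hr := gint i (j - 1) h1 h2 (by omega)
    have e : j - 1 + 1 = j := by omega
    rw [e] at hr
    omega
  have gdiag : ∀ i j, i + 1 ≤ n → j ≤ i → g i j < g (i + 1) (j + 1) := by
    intro i j h1 h2
    have hr := gint (i + 1) j (by omega) h1 (by omega)
    simpa using hr.2
  have gcol : ∀ i j, i + 1 ≤ n → j ≤ i → g (i + 1) j ≤ g i j := by
    intro i j h1 h2
    have hr := gint (i + 1) j (by omega) h1 (by omega)
    simpa using hr.1
  have hcol : ∀ i j, 1 ≤ i → i ≤ n + 1 → j ≤ i - 1 → h i j ≤ h (i - 1) j :=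
    fun i j a b c => (hint i j a b c).1
  have hrs : ∀ i j, 1 ≤ i → i ≤ n + 1 → j ≤ i - 1 → h i j < h i (j + 1) := by
    intro i j a b c
    have hr := hint i j a b c
    omega
  have hdiag : ∀ i j, 1 ≤ i → i ≤ n + 1 → 1 ≤ j → j ≤ i → h (i - 1) (j - 1) < h i j := by
    intro i j a b c d
    have hr := hint i (j - 1) a b (by omega)
    have e : j - 1 + 1 = j := by omega
    rw [e] at hr
    omega
  have S_char : ∀ ξ : ℕ → ℕ → Bool, HHShuffle n g ξ = h ↔
      ∀ i j, i ≤ n → j ≤ i → shuffleRow g ξ (h (i - 1)) i j = h i j :=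
    fun ξ => S_iff n g h hbot hzero ξ
  have T_char : ∀ ξ' : ℕ → ℕ → Bool, HHRevShuffle n h ξ' = g ↔
      ∀ i j, i < n → j ≤ i → revRow h ξ' (g (i + 1)) i j = g i j :=
    fun ξ' => T_iff n h g gbot gzero ξ'
  -- P from the forward side
  have P_of_S : ∀ ξ : ℕ → ℕ → Bool,
      (∀ i j, i ≤ n → j ≤ i → shuffleRow g ξ (h (i - 1)) i j = h i j) →
      ∀ i j, i ≤ n → j ≤ i → h i j = g i j ∨ h i j = g i j + 1 := by
    intro ξ hF i j hi hj
    have t := hF i j hi hj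
    unfold shuffleRow at t
    split_ifs at t with c1 c2 c3
    · left; omega
    · right; omega
    · right; omega
    · left; omega
  -- P from the backward side
  have P_of_T : ∀ ξ' : ℕ → ℕ → Bool,
      (∀ i j, i < n → j ≤ i → revRow h ξ' (g (i + 1)) i j = g i j) →
      ∀ i j, i ≤ n → j ≤ i → h i j = g i j ∨ h i j = g i j + 1 := by
    intro ξ' hF i j hi hj
    by_cases hi' : i < n
    · have t := hF i j hi' hj
      unfold revRow at t
      split_ifs at t with c1 c2 c3
      · left; omega
      · have hp : 1 ≤ g (i + 1) (j + 1) := gpos (i + 1) (j + 1) (by omega) (by omega)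
        right; omega
      · have hp : 1 ≤ h i j := hpos i j hj (by omega)
        right; omega
      · left; omega
    · have hin : i = n := by omega
      subst hin
      have t := hint (i + 1) j (by omega) (by omega) (by omega)
      simp only [Nat.add_sub_cancel] at t
      have e1 := hbot j (by omega)
      have e2 := hbot (j + 1) (by omega)
      have e3 := gbot j (by omega)
      omega
  -- Phi maps Sset into Tset
  have hPhiT : ∀ ξ ∈ Sset, Phi n g h ξ ∈ Tset := by
    intro ξ hξ
    obtain ⟨hsupp, heq⟩ := hξ
    have hF := (S_char ξ).1 heq
    have P := P_of_S ξ hF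
    refine ⟨?_, (T_char _).2 ?_⟩
    · intro i j hij
      unfold Phi
      exact if_neg hij
    · intro i j hi hj
      have Pij := P i j (by omega) hj
      unfold revRow
      by_cases c1 : h i j = g (i + 1) j
      · rw [if_pos c1]
        have hc := gcol i j (by omega) hj
        omega
      · rw [if_neg c1]
        by_cases c2 : h i j = g (i + 1) (j + 1)
        · rw [if_pos c2]
          have hc := gdiag i j (by omega) hj
          omega
        · rw [if_neg c2]
          have hv : Phi n g h ξ i j = decide (h i j = g i j + 1) := by
            unfold Phi
            rw [if_pos ⟨hj, hi⟩, if_neg c1, if_neg c2]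
          rw [hv]
          rcases Pij with hp | hp
          · have hne : ¬ (h i j = g i j + 1) := by omega
            simp [hne, hp]
          · simp [hp]
  -- injectivity on Sset
  have hinj : Set.InjOn (Phi n g h) Sset := by
    intro ξ1 hξ1 ξ2 hξ2 hE
    obtain ⟨hs1, he1⟩ := hξ1
    obtain ⟨hs2, he2⟩ := hξ2
    have hF1 := (S_char ξ1).1 he1
    have hF2 := (S_char ξ2).1 he2
    funext i j
    by_cases hij : j ≤ i ∧ i ≤ n
    swap
    · rw [hs1 i j hij, hs2 i j hij]
    obtain ⟨hj, hi⟩ := hij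
    by_cases c1 : j < i ∧ g i j = h (i - 1) j
    · have hE' := congrFun (congrFun hE (i - 1)) j
      unfold Phi at hE'
      simp only [if_pos (⟨by omega, by omega⟩ : j ≤ i - 1 ∧ i - 1 < n)] at hE'
      have e1 : i - 1 + 1 = i := by omega
      rw [e1] at hE'
      simp only [if_pos c1.2.symm] at hE'
      exact hE'
    by_cases c2 : 0 < j ∧ g i j = h (i - 1) (j - 1)
    · have hE' := congrFun (congrFun hE (i - 1)) (j - 1)
      unfold Phi at hE'
      simp only [if_pos (⟨by omega, by omega⟩ : j - 1 ≤ i - 1 ∧ i - 1 < n)] at hE'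
      have e1 : i - 1 + 1 = i := by omega
      have e2 : j - 1 + 1 = j := by omega
      rw [e1, e2] at hE'
      have nc1 : ¬ (h (i - 1) (j - 1) = g i (j - 1)) := by
        intro hc
        have := grs i j (by omega) hi c2.1 hj
        omega
      simp only [if_neg nc1, if_pos c2.2.symm] at hE'
      exact hE'
    · have t1 := hF1 i j hi hj
      have t2 := hF2 i j hi hj
      unfold shuffleRow at t1 t2
      rw [if_neg c1, if_neg c2] at t1
      rw [if_neg c1, if_neg c2] at t2
      have key : ∀ ξ : ℕ → ℕ → Bool, g i j + (if ξ i j then 1 else 0) = h i j →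
          ξ i j = decide (h i j = g i j + 1) := by
        intro ξ t
        cases hb : ξ i j
        · rw [hb] at t
          simp at t
          have hne : ¬ (h i j = g i j + 1) := by omega
          simp [hne]
        · rw [hb] at t
          simp at t
          have heq1 : h i j = g i j + 1 := by omega
          simp [heq1]
      rw [key ξ1 t1, key ξ2 t2]
  -- surjectivity onto Tset
  have hsurj : ∀ ξ' ∈ Tset, ∃ ξ ∈ Sset, Phi n g h ξ = ξ' := by
    intro ξ' hξ'
    obtain ⟨hs', he'⟩ := hξ'
    have hF' := (T_char ξ').1 he'
    have P := P_of_T ξ' hF'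
    refine ⟨Psi n g h ξ', ⟨?_, (S_char _).2 ?_⟩, ?_⟩
    · intro i j hij
      unfold Psi
      exact if_neg hij
    · intro i j hi hj
      have Pij := P i j hi hj
      unfold shuffleRow
      by_cases c1 : j < i ∧ g i j = h (i - 1) j
      · rw [if_pos c1]
        have h1 : h i j ≤ h (i - 1) j := hcol i j (by omega) (by omega) (by omega)
        omega
      · rw [if_neg c1]
        by_cases c2 : 0 < j ∧ g i j = h (i - 1) (j - 1)
        · rw [if_pos c2]
          have hd : h (i - 1) (j - 1) < h i j :=
            hdiag i j (by omega) (by omega) (by omega) hj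
          omega
        · rw [if_neg c2]
          have hv : Psi n g h ξ' i j = decide (h i j = g i j + 1) := by
            unfold Psi
            rw [if_pos ⟨hj, hi⟩, if_neg c1, if_neg c2]
          rw [hv]
          rcases Pij with hp | hp
          · have hne : ¬ (h i j = g i j + 1) := by omega
            simp [hne, hp]
          · simp [hp]
    · funext i j
      by_cases hij : j ≤ i ∧ i < n
      swap
      · unfold Phi
        rw [if_neg hij, hs' i j hij]
      obtain ⟨hj, hi⟩ := hij
      unfold Phi
      rw [if_pos ⟨hj, hi⟩]
      by_cases c1 : h i j = g (i + 1) j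
      · rw [if_pos c1]
        unfold Psi
        simp only [Nat.add_sub_cancel]
        rw [if_pos (⟨by omega, by omega⟩ : j ≤ i + 1 ∧ i + 1 ≤ n),
          if_pos ⟨by omega, c1.symm⟩]
      · rw [if_neg c1]
        by_cases c2 : h i j = g (i + 1) (j + 1)
        · rw [if_pos c2]
          unfold Psi
          simp only [Nat.add_sub_cancel]
          rw [if_pos (⟨by omega, by omega⟩ : j + 1 ≤ i + 1 ∧ i + 1 ≤ n)]
          have nb1 : ¬ (j + 1 < i + 1 ∧ g (i + 1) (j + 1) = h i (j + 1)) := by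
            rintro ⟨hlt, he2⟩
            have := hrs i j (by omega) (by omega) (by omega)
            omega
          rw [if_neg nb1, if_pos ⟨by omega, c2.symm⟩]
        · rw [if_neg c2]
          have t := hF' i j hi hj
          unfold revRow at t
          rw [if_neg c1, if_neg c2] at t
          have hp : 1 ≤ h i j := hpos i j hj (by omega)
          cases hb : ξ' i j
          · rw [hb] at t
            simp at t
            have hne : ¬ (h i j = g i j + 1) := by omega
            simp [hne]
          · rw [hb] at t
            simp at t
            have : h i j = g i j + 1 := by omega
            simp [this]
  have himg : Tset = Phi n g h '' Sset := by
    apply Set.Subset.antisymm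
    · intro ξ' hξ'
      obtain ⟨ξ, hξ, hEq⟩ := hsurj ξ' hξ'
      exact ⟨ξ, hξ, hEq⟩
    · rintro _ ⟨ξ, hξ, rfl⟩
      exact hPhiT ξ hξ
  rw [himg]
  exact (Set.ncard_image_of_injOn hinj).symm
end

section
/- The half-hexagon domino shuffle preserves the uniform distribution: for every n ≥ 0 and every h ∈ ST(n+1), the total number of pairs (g, ξ) with g ∈ ST(n) and ξ ∈ {0,1}^{I_n} such that A(g, ξ) = h equals 2^{n(n+1)/2}; in particular this count is the same for every h ∈ ST(n+1). -/
namespace StmtAux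

abbrev Pair := (ℕ → ℕ → ℕ) × (ℕ → ℕ → Bool)

lemma shuffleRow_out (g : ℕ → ℕ → ℕ) (ξ : ℕ → ℕ → Bool) (prev : ℕ → ℕ) (i j : ℕ) :
    shuffleRow g ξ prev i j = g i j ∨ shuffleRow g ξ prev i j = g i j + 1 := by
  unfold shuffleRow
  split_ifs <;> simp

lemma shuffleRow_congr (g g' : ℕ → ℕ → ℕ) (ξ ξ' : ℕ → ℕ → Bool) (prev : ℕ → ℕ) (i j : ℕ)
    (hg : g i j = g' i j) (hξ : ξ i j = ξ' i j) :
    shuffleRow g ξ prev i j = shuffleRow g' ξ' prev i j := by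
  unfold shuffleRow
  rw [hg, hξ]

lemma shuffleRow_prev_congr (g : ℕ → ℕ → ℕ) (ξ : ℕ → ℕ → Bool) (prev prev' : ℕ → ℕ)
    (i j : ℕ) (h1 : ∀ j', j' + 1 ≤ i → prev j' = prev' j') (hj : j ≤ i) :
    shuffleRow g ξ prev i j = shuffleRow g ξ prev' i j := by
  unfold shuffleRow
  have e1 : (j < i ∧ g i j = prev j) = (j < i ∧ g i j = prev' j) := by
    by_cases hji : j < i
    · rw [h1 j hji]
    · simp [hji]
  have e2 : (0 < j ∧ g i j = prev (j-1)) = (0 < j ∧ g i j = prev' (j-1)) := by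
    by_cases h0 : 0 < j
    · rw [h1 (j-1) (by omega)]
    · simp [h0]
  simp only [e1, e2]


section CountFun

variable {α : Type} (z : α) (A : ℕ → Set α)

def cfSet (m : ℕ) : Set (ℕ → α) :=
  {f : ℕ → α | (∀ j, j ≤ m → f j ∈ A j) ∧ ∀ j, m < j → f j = z}

def cfBaseEquiv : ↥(cfSet z A 0) ≃ ↥(A 0) where
  toFun f := ⟨f.1 0, f.2.1 0 le_rfl⟩
  invFun a := ⟨fun j => if j = 0 then a.1 else z, by
    constructor
    · intro j hj
      have hz : j = 0 := Nat.le_zero.mp hj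
      subst hz
      simpa using a.2
    · intro j hj
      have hne : j ≠ 0 := by omega
      simp [hne]⟩
  left_inv f := by
    apply Subtype.ext
    funext j
    by_cases hj : j = 0
    · subst hj; simp
    · simp only [hj, if_false]
      exact (f.2.2 j (by omega)).symm
  right_inv a := by
    apply Subtype.ext
    simp

def cfSplitEquiv (m : ℕ) : ↥(cfSet z A (m+1)) ≃ ↥(cfSet z A m) × ↥(A (m+1)) where
  toFun f :=
    (⟨fun j => if j = m+1 then z else f.1 j, by
      obtain ⟨f, hf1, hf2⟩ := f
      constructor
      · intro j hj
        have hne : j ≠ m+1 := by omega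
        simp only [hne, if_false]
        exact hf1 j (by omega)
      · intro j hj
        by_cases hj1 : j = m+1
        · simp [hj1]
        · simp only [hj1, if_false]
          exact hf2 j (by omega)⟩,
     ⟨f.1 (m+1), f.2.1 (m+1) le_rfl⟩)
  invFun q :=
    ⟨fun j => if j = m+1 then q.2.1 else q.1.1 j, by
      obtain ⟨⟨f, hf1, hf2⟩, a, ha⟩ := q
      constructor
      · intro j hj
        by_cases hj1 : j = m+1
        · subst hj1; simpa using ha
        · simp only [hj1, if_false]
          exact hf1 j (by omega)
      · intro j hj
        have hne : j ≠ m+1 := by omega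
        simp only [hne, if_false]
        exact hf2 j (by omega)⟩
  left_inv f := by
    apply Subtype.ext
    funext j
    by_cases hj : j = m+1
    · subst hj; simp
    · simp [hj]
  right_inv q := by
    refine Prod.ext ?_ ?_
    · apply Subtype.ext
      funext j
      by_cases hj : j = m+1
      · subst hj
        simp only [if_pos rfl]
        exact (q.1.2.2 (m+1) (by omega)).symm
      · simp [hj]
    · apply Subtype.ext
      simp

/-- generic counting of constrained function spaces -/
lemma count_fun (c : ℕ → ℕ) (hA : ∀ j, Finite (A j) ∧ Nat.card (A j) = c j) :
    ∀ m : ℕ, Finite ↥(cfSet z A m) ∧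
      Nat.card ↥(cfSet z A m) = ∏ j ∈ Finset.range (m+1), c j := by
  intro m
  induction m with
  | zero =>
    haveI := (hA 0).1
    constructor
    · exact Finite.of_equiv _ (cfBaseEquiv z A).symm
    · rw [Nat.card_congr (cfBaseEquiv z A), (hA 0).2]
      simp
  | succ m ih =>
    haveI := ih.1
    haveI := (hA (m+1)).1
    constructor
    · exact Finite.of_equiv _ (cfSplitEquiv z A m).symm
    · rw [Nat.card_congr (cfSplitEquiv z A m), Nat.card_prod, ih.2, (hA (m+1)).2,
        ← Finset.prod_range_succ]

end CountFun


section Main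

variable (h : ℕ → ℕ → ℕ)

/-- site `(i,j)` of row `i` with value `x` is a "free" (branch-1/2) site. -/
def Free (i j x : ℕ) : Prop := (j < i ∧ x = h (i-1) j) ∨ (0 < j ∧ x = h (i-1) (j-1))

instance (i j x : ℕ) : Decidable (Free h i j x) := by unfold Free; infer_instance

/-- `r` is a valid candidate for row `k` of a preimage. -/
def Valid (k : ℕ) (r : ℕ → ℕ) : Prop :=
  (∀ j, j ≤ k → h k j - 1 ≤ r j ∧ r j ≤ h k j) ∧
  (∀ j, j < k → r j < r (j+1)) ∧ 1 ≤ r 0 ∧ ∀ j, k < j → r j = 0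

lemma Valid_pos {k : ℕ} {r : ℕ → ℕ} (hv : Valid h k r) : ∀ j, j ≤ k → 1 ≤ r j := by
  intro j
  induction j with
  | zero => intro _; exact hv.2.2.1
  | succ j ih =>
    intro hj
    have h1 : 1 ≤ r j := ih (by omega)
    have h2 : r j < r (j+1) := hv.2.1 j (by omega)
    omega

/-- partial preimages: rows `0..k` of `(g, ξ)`, with row `k` of `g` pinned to `r`. -/
def TT (k : ℕ) (r : ℕ → ℕ) : Set Pair :=
  {p | (∀ i j, ¬(j ≤ i ∧ i ≤ k) → p.1 i j = 0) ∧
       (∀ i j, ¬(j ≤ i ∧ i ≤ k) → p.2 i j = false) ∧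
       (∀ j, j ≤ k → p.1 k j = r j) ∧
       (∀ i j, j ≤ i → i ≤ k → 1 ≤ p.1 i j) ∧
       (∀ i j, 1 ≤ i → i ≤ k → j ≤ i - 1 →
          p.1 i j ≤ p.1 (i-1) j ∧ p.1 (i-1) j < p.1 i (j+1)) ∧
       (∀ i, i ≤ k → ∀ j, j ≤ i → shuffleRow p.1 p.2 (h (i-1)) i j = h i j)}

/-- possible values of entry `j` of row `k`, given row `k+1` equal to `r`. -/
def VA (k : ℕ) (r : ℕ → ℕ) (j : ℕ) : Set ℕ :=
  {x | (h k j - 1 ≤ x ∧ x ≤ h k j) ∧ r j ≤ x ∧ x < r (j+1)}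

def Vset (k : ℕ) (r : ℕ → ℕ) : Set (ℕ → ℕ) := cfSet 0 (VA h k r) k

/-- possible values of the bit at site `(k+1, j)` given row `k+1` equal to `r`. -/
def XA (k : ℕ) (r : ℕ → ℕ) (j : ℕ) : Set Bool :=
  {b | j ≤ k+1 → ¬ Free h (k+1) j (r j) → r j + (if b then 1 else 0) = h (k+1) j}

def Xset (k : ℕ) (r : ℕ → ℕ) : Set (ℕ → Bool) := cfSet false (XA h k r) (k+1)

def rowk (k : ℕ) (p : Pair) : ℕ → ℕ := fun j => if j ≤ k then p.1 k j else 0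

def Wset (k : ℕ) (r : ℕ → ℕ) : Set Pair :=
  {p | rowk k p ∈ Vset h k r ∧ p ∈ TT h k (rowk k p)}

section Step

variable {n k : ℕ} {r : ℕ → ℕ}
variable (hh : IsStaircaseTableau (n+1) h) (hkn : k + 1 ≤ n)
variable (hr : Valid h (k+1) r)

include hh hkn

lemma hInt : ∀ j, j ≤ k → h (k+1) j ≤ h k j ∧ h k j < h (k+1) (j+1) := by
  intro j hj
  have := hh.2.1 (k+1) j (by omega) (by omega) (by simpa using hj)
  simpa using this

lemma hRowS : ∀ j, j + 1 ≤ k → h k j < h k (j+1) := by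
  intro j hj
  have h1 := hh.2.1 (k+1) j (by omega) (by omega) (by simpa using by omega)
  have h2 := hh.2.1 (k+1) (j+1) (by omega) (by omega) (by simpa using by omega)
  simp only [Nat.add_sub_cancel] at h1 h2
  omega

lemma hPosk : ∀ j, j ≤ k → 1 ≤ h k j := fun j hj => hh.1 k j hj (by omega)

lemma hOff : ∀ j, k < j → h k j = 0 := fun j hj => hh.2.2.2 k j (by omega)

include hr

lemma VA_card : ∀ j, Finite (VA h k r j) ∧ Nat.card (VA h k r j) =
    (if j ≤ k then (if r j = h k j ∨ r (j+1) = h k j then 1 else 2) else 0) := by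
  intro j
  by_cases hj : j ≤ k
  · have hint := hInt h hh hkn j hj
    have hrj := hr.1 j (by omega)
    have hrj1 := hr.1 (j+1) (by omega)
    have hstr : r j < r (j+1) := hr.2.1 j (by omega)
    have hp : 1 ≤ h k j := hPosk h hh hkn j hj
    by_cases hc : r j = h k j ∨ r (j+1) = h k j
    · rw [if_pos hj, if_pos hc]
      rcases hc with hc1 | hc2
      · have hA : VA h k r j = {h k j} := by
          ext x
          simp only [VA, Set.mem_setOf_eq, Set.mem_singleton_iff]
          omega
        rw [hA]
        exact ⟨by infer_instance, by rw [Nat.card_coe_set_eq, Set.ncard_singleton]⟩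
      · have hA : VA h k r j = {h k j - 1} := by
          ext x
          simp only [VA, Set.mem_setOf_eq, Set.mem_singleton_iff]
          omega
        rw [hA]
        exact ⟨by infer_instance, by rw [Nat.card_coe_set_eq, Set.ncard_singleton]⟩
    · push_neg at hc
      have hA : VA h k r j = {h k j - 1, h k j} := by
        ext x
        simp only [VA, Set.mem_setOf_eq, Set.mem_insert_iff, Set.mem_singleton_iff]
        omega
      rw [hA, if_pos hj, if_neg (by push_neg; exact ⟨hc.1, hc.2⟩)]
      constructor
      · infer_instance
      · rw [Nat.card_coe_set_eq, Set.ncard_pair (by omega)]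
  · have hA : VA h k r j = ∅ := by
      ext x
      simp only [VA, Set.mem_setOf_eq, Set.mem_empty_iff_false, iff_false]
      by_cases hj1 : j = k + 1
      · subst hj1
        have h0 : h k (k+1) = 0 := hOff h hh hkn (k+1) (by omega)
        have h1 : 1 ≤ r (k+1) := Valid_pos h hr (k+1) le_rfl
        omega
      · have h0 : r j = 0 := hr.2.2.2 j (by omega)
        have h1 : r (j+1) = 0 := hr.2.2.2 (j+1) (by omega)
        omega
    rw [hA, if_neg hj]
    constructor
    · infer_instance
    · simp


omit hh hkn in
lemma XA_card : ∀ j, Finite (XA h k r j) ∧ Nat.card (XA h k r j) =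
    (if j ≤ k+1 then (if Free h (k+1) j (r j) then 2 else 1) else 2) := by
  intro j
  refine ⟨by infer_instance, ?_⟩
  rw [Nat.card_coe_set_eq]
  by_cases hj : j ≤ k+1
  · by_cases hf : Free h (k+1) j (r j)
    · have hA : XA h k r j = Set.univ := by
        ext b
        simp [XA, hf]
      rw [hA, if_pos hj, if_pos hf, Set.ncard_univ]
      simp
    · have hb := hr.1 j hj
      have hp := Valid_pos h hr j hj
      have hcase : h (k+1) j = r j ∨ h (k+1) j = r j + 1 := by omega
      have hA : XA h k r j = {decide (h (k+1) j = r j + 1)} := by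
        ext b
        simp only [XA, Set.mem_setOf_eq, Set.mem_singleton_iff]
        rcases hcase with hc | hc <;> cases b <;>
          simp [hj, hf, hc] <;> omega
      rw [hA, if_pos hj, if_neg hf, Set.ncard_singleton]
  · have hA : XA h k r j = Set.univ := by
      ext b
      simp [XA, hj]
    rw [hA, if_neg hj, Set.ncard_univ]
    simp

end Step

/-- number of forced coordinates for row `k`, given row `k+1` equal to `r`. -/
def nForced (k : ℕ) (r : ℕ → ℕ) : ℕ :=
  ((Finset.range (k+1)).filter (fun j => r j = h k j ∨ r (j+1) = h k j)).card

lemma nForced_le (k : ℕ) (r : ℕ → ℕ) : nForced h k r ≤ k + 1 :=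
  le_trans (Finset.card_filter_le _ _) (by simp)

section Step2

variable {n k : ℕ} {r : ℕ → ℕ}
variable (hh : IsStaircaseTableau (n+1) h) (hkn : k + 1 ≤ n) (hr : Valid h (k+1) r)

include hh hkn hr

lemma Vset_card : Finite ↥(Vset h k r) ∧
    Nat.card ↥(Vset h k r) = 2 ^ (k + 1 - nForced h k r) := by
  obtain ⟨hf, hc⟩ := count_fun 0 (VA h k r)
    (fun j => if j ≤ k then (if r j = h k j ∨ r (j+1) = h k j then 1 else 2) else 0)
    (VA_card h hh hkn hr) k
  refine ⟨hf, ?_⟩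
  show Nat.card ↥(cfSet 0 (VA h k r) k) = _
  rw [hc]
  have e1 : ∏ j ∈ Finset.range (k+1),
      (if j ≤ k then (if r j = h k j ∨ r (j+1) = h k j then (1:ℕ) else 2) else 0)
      = ∏ j ∈ Finset.range (k+1), (if r j = h k j ∨ r (j+1) = h k j then (1:ℕ) else 2) := by
    apply Finset.prod_congr rfl
    intro j hj
    rw [if_pos (by simp at hj; omega)]
  rw [e1]
  calc ∏ j ∈ Finset.range (k+1), (if r j = h k j ∨ r (j+1) = h k j then (1:ℕ) else 2)
      = ∏ j ∈ Finset.range (k+1), (if ¬(r j = h k j ∨ r (j+1) = h k j) then (2:ℕ) else 1) := by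
        exact Finset.prod_congr rfl (fun j _ => (ite_not _ _ _).symm)
    _ = ∏ j ∈ (Finset.range (k+1)).filter (fun j => ¬(r j = h k j ∨ r (j+1) = h k j)), (2:ℕ) :=
        (Finset.prod_filter _ _).symm
    _ = 2 ^ ((Finset.range (k+1)).filter (fun j => ¬(r j = h k j ∨ r (j+1) = h k j))).card :=
        Finset.prod_const 2
    _ = 2 ^ (k + 1 - nForced h k r) := by
        congr 1
        have hsum := Finset.card_filter_add_card_filter_not
          (s := Finset.range (k+1)) (p := fun j => r j = h k j ∨ r (j+1) = h k j)
        simp only [Finset.card_range] at hsum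
        unfold nForced
        omega

omit hh hkn in
lemma Xset_card : Finite ↥(Xset h k r) ∧
    Nat.card ↥(Xset h k r)
      = 2 ^ (((Finset.range (k+2)).filter (fun j => Free h (k+1) j (r j))).card) := by
  obtain ⟨hf, hc⟩ := count_fun false (XA h k r)
    (fun j => if j ≤ k+1 then (if Free h (k+1) j (r j) then 2 else 1) else 2)
    (XA_card h hr) (k+1)
  refine ⟨hf, ?_⟩
  show Nat.card ↥(cfSet false (XA h k r) (k+1)) = _
  rw [hc]
  have e1 : ∏ j ∈ Finset.range (k+1+1),
      (if j ≤ k+1 then (if Free h (k+1) j (r j) then (2:ℕ) else 1) else 2)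
      = ∏ j ∈ Finset.range (k+2), (if Free h (k+1) j (r j) then (2:ℕ) else 1) := by
    apply Finset.prod_congr rfl
    intro j hj
    rw [if_pos (by simp at hj; omega)]
  rw [e1, ← Finset.prod_filter (fun j => Free h (k+1) j (r j)) (fun _ => (2:ℕ)),
    Finset.prod_const]

lemma free_count_eq :
    ((Finset.range (k+2)).filter (fun j => Free h (k+1) j (r j))).card = nForced h k r := by
  have e0 : ((Finset.range (k+2)).filter (fun j => Free h (k+1) j (r j))).card
      = ((Finset.range (k+2)).filter (fun j => (j < k+1 ∧ r j = h k j) ∨ (0 < j ∧ r j = h k (j-1)))).card := by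
    congr 1
  have hd2 : Disjoint ((Finset.range (k+2)).filter (fun j => j < k+1 ∧ r j = h k j))
      ((Finset.range (k+2)).filter (fun j => 0 < j ∧ r j = h k (j-1))) := by
    rw [Finset.disjoint_left]
    intro a hamem hamem2
    simp only [Finset.mem_filter, Finset.mem_range] at hamem hamem2
    obtain ⟨ha0, ha1, ha2⟩ := hamem
    obtain ⟨_, ha3, ha4⟩ := hamem2
    have hs : h k (a-1) < h k a := by
      have := hRowS h hh hkn (a-1) (by omega)
      rw [show a - 1 + 1 = a by omega] at this
      exact this
    omega
  have e1 : ((Finset.range (k+2)).filter (fun j => j < k+1 ∧ r j = h k j))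
      = (Finset.range (k+1)).filter (fun j => r j = h k j) := by
    ext j
    simp only [Finset.mem_filter, Finset.mem_range]
    constructor
    · rintro ⟨_, hj, he⟩; exact ⟨hj, he⟩
    · rintro ⟨hj, he⟩; exact ⟨by omega, hj, he⟩
  have e2 : ((Finset.range (k+2)).filter (fun j => 0 < j ∧ r j = h k (j-1))).card
      = ((Finset.range (k+1)).filter (fun j => r (j+1) = h k j)).card := by
    refine Finset.card_bij' (fun j _ => j - 1) (fun j _ => j + 1) ?_ ?_ ?_ ?_
    · intro a ha
      simp only [Finset.mem_filter, Finset.mem_range] at ha ⊢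
      obtain ⟨ha1, ha2, ha3⟩ := ha
      refine ⟨by omega, ?_⟩
      rw [show a - 1 + 1 = a by omega]
      exact ha3
    · intro a ha
      simp only [Finset.mem_filter, Finset.mem_range] at ha ⊢
      obtain ⟨ha1, ha2⟩ := ha
      refine ⟨by omega, by omega, ?_⟩
      rw [Nat.add_sub_cancel]
      exact ha2
    · intro a ha
      simp only [Finset.mem_filter, Finset.mem_range] at ha
      show a - 1 + 1 = a
      omega
    · intro a ha
      show a + 1 - 1 = a
      omega
  have hd1 : Disjoint ((Finset.range (k+1)).filter (fun j => r j = h k j))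
      ((Finset.range (k+1)).filter (fun j => r (j+1) = h k j)) := by
    rw [Finset.disjoint_left]
    intro a hamem hamem2
    simp only [Finset.mem_filter, Finset.mem_range] at hamem hamem2
    have hstr : r a < r (a+1) := hr.2.1 a (by omega)
    omega
  rw [e0, Finset.filter_or, Finset.card_union_of_disjoint hd2, e1, e2]
  unfold nForced
  rw [Finset.filter_or, Finset.card_union_of_disjoint hd1]

end Step2

def innerg (k : ℕ) (p : Pair) : Pair :=
  (fun i j => if i ≤ k ∧ j ≤ i then p.1 i j else 0,
   fun i j => if i ≤ k ∧ j ≤ i then p.2 i j else false)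

def trowf (k : ℕ) (p : Pair) : ℕ → Bool := fun j => if j ≤ k+1 then p.2 (k+1) j else false

def asmb (k : ℕ) (r : ℕ → ℕ) (t : ℕ → Bool) (p : Pair) : Pair :=
  (fun i j => if i ≤ k then p.1 i j else if i ≤ k+1 ∧ j ≤ k+1 then r j else 0,
   fun i j => if i ≤ k then p.2 i j else if i ≤ k+1 ∧ j ≤ k+1 then t j else false)

lemma asmb_fst_low (k : ℕ) (r : ℕ → ℕ) (t : ℕ → Bool) (p : Pair) {i : ℕ} (j : ℕ)
    (hik : i ≤ k) : (asmb k r t p).1 i j = p.1 i j := by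
  simp only [asmb]
  rw [if_pos hik]

lemma asmb_fst_top (k : ℕ) (r : ℕ → ℕ) (t : ℕ → Bool) (p : Pair) {i j : ℕ}
    (hik : ¬ i ≤ k) (hi2 : i ≤ k+1) (hj : j ≤ k+1) : (asmb k r t p).1 i j = r j := by
  simp only [asmb]
  rw [if_neg hik, if_pos ⟨hi2, hj⟩]

lemma asmb_fst_out (k : ℕ) (r : ℕ → ℕ) (t : ℕ → Bool) (p : Pair) {i j : ℕ}
    (hik : ¬ i ≤ k) (h2 : ¬ (i ≤ k+1 ∧ j ≤ k+1)) : (asmb k r t p).1 i j = 0 := by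
  simp only [asmb]
  rw [if_neg hik, if_neg h2]

lemma asmb_snd_low (k : ℕ) (r : ℕ → ℕ) (t : ℕ → Bool) (p : Pair) {i : ℕ} (j : ℕ)
    (hik : i ≤ k) : (asmb k r t p).2 i j = p.2 i j := by
  simp only [asmb]
  rw [if_pos hik]

lemma asmb_snd_top (k : ℕ) (r : ℕ → ℕ) (t : ℕ → Bool) (p : Pair) {i j : ℕ}
    (hik : ¬ i ≤ k) (hi2 : i ≤ k+1) (hj : j ≤ k+1) : (asmb k r t p).2 i j = t j := by
  simp only [asmb]
  rw [if_neg hik, if_pos ⟨hi2, hj⟩]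

lemma asmb_snd_out (k : ℕ) (r : ℕ → ℕ) (t : ℕ → Bool) (p : Pair) {i j : ℕ}
    (hik : ¬ i ≤ k) (h2 : ¬ (i ≤ k+1 ∧ j ≤ k+1)) : (asmb k r t p).2 i j = false := by
  simp only [asmb]
  rw [if_neg hik, if_neg h2]

lemma shuffleRow_eval_of_not_free (g : ℕ → ℕ → ℕ) (ξ : ℕ → ℕ → Bool) (i j : ℕ)
    (hnf : ¬ Free h i j (g i j)) :
    shuffleRow g ξ (h (i-1)) i j = g i j + (if ξ i j then 1 else 0) := by
  unfold shuffleRow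
  rw [if_neg (fun hc => hnf (Or.inl hc)), if_neg (fun hc => hnf (Or.inr hc))]

section Step3

variable {n k : ℕ} {r : ℕ → ℕ}
variable (hh : IsStaircaseTableau (n+1) h) (hkn : k + 1 ≤ n) (hr : Valid h (k+1) r)

lemma rowk_innerg (p : Pair) : rowk k (innerg k p) = rowk k p := by
  funext j
  by_cases hj : j ≤ k <;> simp [rowk, innerg, hj]

omit hh hkn hr in
lemma TT_rowk {p : Pair} (hp : p ∈ TT h (k+1) r) :
    ∀ j, j ≤ k → rowk k p j ∈ VA h k r j := by
  obtain ⟨h1, h2, h3, h4, h5, h6⟩ := hp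
  intro j hj
  have hout := h6 k (by omega) j hj
  rcases shuffleRow_out p.1 p.2 (h (k-1)) k j with ho | ho <;> rw [ho] at hout
  all_goals {
    have h5' := h5 (k+1) j (by omega) le_rfl (by simpa using hj)
    simp only [Nat.add_sub_cancel] at h5'
    have e1 : p.1 (k+1) j = r j := h3 j (by omega)
    have e2 : p.1 (k+1) (j+1) = r (j+1) := h3 (j+1) (by omega)
    simp only [VA, Set.mem_setOf_eq, rowk, if_pos hj]
    refine ⟨⟨by omega, by omega⟩, by omega, by omega⟩ }

omit hh hkn hr in
lemma innerg_mem {p : Pair} (hp : p ∈ TT h (k+1) r) :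
    innerg k p ∈ Wset h k r := by
  obtain ⟨h1, h2, h3, h4, h5, h6⟩ := hp
  constructor
  · -- rowk (innerg) ∈ Vset
    rw [rowk_innerg]
    constructor
    · exact TT_rowk h ⟨h1, h2, h3, h4, h5, h6⟩
    · intro j hj
      rw [rowk, if_neg (by omega)]
  · -- innerg ∈ TT h k (rowk k (innerg k p))
    refine ⟨?_, ?_, ?_, ?_, ?_, ?_⟩
    · intro i j hij
      simp only [innerg]
      rw [if_neg (by tauto)]
    · intro i j hij
      simp only [innerg]
      rw [if_neg (by tauto)]
    · intro j hj
      rw [rowk_innerg, rowk, if_pos hj]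
      simp only [innerg]
      rw [if_pos ⟨le_rfl, hj⟩]
    · intro i j hji hik
      simp only [innerg]
      rw [if_pos ⟨hik, hji⟩]
      exact h4 i j hji (by omega)
    · intro i j hi1 hik hji
      simp only [innerg]
      rw [if_pos ⟨hik, by omega⟩, if_pos ⟨by omega, by omega⟩, if_pos ⟨hik, by omega⟩]
      exact h5 i j hi1 (by omega) hji
    · intro i hik j hji
      have := h6 i (by omega) j hji
      rw [← this]
      apply shuffleRow_congr
      · simp only [innerg]
        rw [if_pos ⟨hik, hji⟩]
      · simp only [innerg]
        rw [if_pos ⟨hik, hji⟩]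

omit hh hkn hr in
lemma trow_mem {p : Pair} (hp : p ∈ TT h (k+1) r) :
    trowf k p ∈ Xset h k r := by
  obtain ⟨h1, h2, h3, h4, h5, h6⟩ := hp
  constructor
  · intro j hj
    intro _ hnf
    have hout := h6 (k+1) le_rfl j hj
    have e1 : p.1 (k+1) j = r j := h3 j hj
    rw [shuffleRow_eval_of_not_free h p.1 p.2 (k+1) j (by rw [e1]; exact hnf)] at hout
    rw [trowf, if_pos hj, ← e1]
    exact hout
  · intro j hj
    rw [trowf, if_neg (by omega)]

omit hh hkn in
include hr in
lemma asmb_mem {w : Pair} {t : ℕ → Bool}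
    (hw : w ∈ Wset h k r) (ht : t ∈ Xset h k r)
    (hint : ∀ j, j ≤ k → h (k+1) j ≤ h k j ∧ h k j < h (k+1) (j+1)) :
    asmb k r t w ∈ TT h (k+1) r := by
  obtain ⟨hwv, hwT⟩ := hw
  obtain ⟨h1, h2, h3, h4, h5, h6⟩ := hwT
  obtain ⟨hva, hvz⟩ := hwv
  obtain ⟨hxa, hxz⟩ := ht
  have hVA : ∀ j, j ≤ k →
      (h k j - 1 ≤ w.1 k j ∧ w.1 k j ≤ h k j) ∧ r j ≤ w.1 k j ∧ w.1 k j < r (j+1) := by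
    intro j hj
    have := hva j hj
    simp only [VA, Set.mem_setOf_eq, rowk, if_pos hj] at this
    exact this
  refine ⟨?_, ?_, ?_, ?_, ?_, ?_⟩
  · intro i j hij
    by_cases hik : i ≤ k
    · rw [asmb_fst_low k r t w j hik]
      exact h1 i j (fun hc => hij ⟨hc.1, by omega⟩)
    · exact asmb_fst_out k r t w hik (fun hc => hij ⟨by omega, by omega⟩)
  · intro i j hij
    by_cases hik : i ≤ k
    · rw [asmb_snd_low k r t w j hik]
      exact h2 i j (fun hc => hij ⟨hc.1, by omega⟩)
    · exact asmb_snd_out k r t w hik (fun hc => hij ⟨by omega, by omega⟩)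
  · intro j hj
    exact asmb_fst_top k r t w (by omega) le_rfl hj
  · intro i j hji hik
    by_cases hik2 : i ≤ k
    · rw [asmb_fst_low k r t w j hik2]
      exact h4 i j hji hik2
    · rw [asmb_fst_top k r t w hik2 hik (by omega)]
      exact Valid_pos h hr j (by omega)
  · intro i j hi1 hik hji
    by_cases hik2 : i ≤ k
    · rw [asmb_fst_low k r t w j hik2, asmb_fst_low k r t w j (by omega : i - 1 ≤ k),
        asmb_fst_low k r t w (j+1) hik2]
      exact h5 i j hi1 hik2 hji
    · have hie : i = k+1 := by omega
      subst hie
      simp only [Nat.add_sub_cancel] at hji ⊢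
      rw [asmb_fst_top k r t w hik2 le_rfl (by omega), asmb_fst_low k r t w j le_rfl,
        asmb_fst_top k r t w hik2 le_rfl (by omega)]
      exact ⟨(hVA j hji).2.1, (hVA j hji).2.2⟩
  · intro i hik j hji
    by_cases hik2 : i ≤ k
    · have hcg : shuffleRow (asmb k r t w).1 (asmb k r t w).2 (h (i-1)) i j
          = shuffleRow w.1 w.2 (h (i-1)) i j :=
        shuffleRow_congr _ _ _ _ _ _ _ (asmb_fst_low k r t w j hik2)
          (asmb_snd_low k r t w j hik2)
      rw [hcg]
      exact h6 i hik2 j hji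
    · have hie : i = k+1 := by omega
      subst hie
      have hjk : j ≤ k+1 := hji
      have hg : (asmb k r t w).1 (k+1) j = r j := asmb_fst_top k r t w hik2 le_rfl hjk
      have hgt : (asmb k r t w).2 (k+1) j = t j := asmb_snd_top k r t w hik2 le_rfl hjk
      unfold shuffleRow
      rw [hg, hgt]
      simp only [Nat.add_sub_cancel]
      by_cases hb1 : j < k+1 ∧ r j = h k j
      · rw [if_pos hb1]
        have hint1 := (hint j (by omega)).1
        have hb := hr.1 j hjk
        omega
      · rw [if_neg hb1]
        by_cases hb2 : 0 < j ∧ r j = h k (j-1)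
        · rw [if_pos hb2]
          have hint2 := (hint (j-1) (by omega)).2
          rw [show j - 1 + 1 = j by omega] at hint2
          have hb := hr.1 j hjk
          omega
        · rw [if_neg hb2]
          have hnf : ¬ Free h (k+1) j (r j) := by
            unfold Free
            simp only [Nat.add_sub_cancel]
            rintro (hc | hc)
            · exact hb1 hc
            · exact hb2 hc
          exact hxa j hjk hjk hnf

omit hh hkn hr in
lemma asmb_innerg {p : Pair} (hp : p ∈ TT h (k+1) r) :
    asmb k r (trowf k p) (innerg k p) = p := by
  obtain ⟨h1, h2, h3, h4, h5, h6⟩ := hp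
  refine Prod.ext ?_ ?_
  · funext i j
    by_cases hik : i ≤ k
    · rw [asmb_fst_low k r (trowf k p) (innerg k p) j hik]
      simp only [innerg]
      by_cases hji : j ≤ i
      · rw [if_pos ⟨hik, hji⟩]
      · rw [if_neg (fun hc => hji hc.2)]
        exact (h1 i j (fun hc => hji hc.1)).symm
    · by_cases h2c : i ≤ k+1 ∧ j ≤ k+1
      · rw [asmb_fst_top k r (trowf k p) (innerg k p) hik h2c.1 h2c.2]
        have hie : i = k+1 := by omega
        subst hie
        exact (h3 j h2c.2).symm
      · rw [asmb_fst_out k r (trowf k p) (innerg k p) hik h2c]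
        exact (h1 i j (fun hc => h2c ⟨by omega, by omega⟩)).symm
  · funext i j
    by_cases hik : i ≤ k
    · rw [asmb_snd_low k r (trowf k p) (innerg k p) j hik]
      simp only [innerg]
      by_cases hji : j ≤ i
      · rw [if_pos ⟨hik, hji⟩]
      · rw [if_neg (fun hc => hji hc.2)]
        exact (h2 i j (fun hc => hji hc.1)).symm
    · by_cases h2c : i ≤ k+1 ∧ j ≤ k+1
      · rw [asmb_snd_top k r (trowf k p) (innerg k p) hik h2c.1 h2c.2]
        have hie : i = k+1 := by omega
        subst hie
        rw [trowf, if_pos h2c.2]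
      · rw [asmb_snd_out k r (trowf k p) (innerg k p) hik h2c]
        exact (h2 i j (fun hc => h2c ⟨by omega, by omega⟩)).symm

omit hh hkn hr in
lemma innerg_asmb {w : Pair} (t : ℕ → Bool) (hw : w ∈ Wset h k r) :
    innerg k (asmb k r t w) = w := by
  obtain ⟨hwv, hwT⟩ := hw
  obtain ⟨h1, h2, h3, h4, h5, h6⟩ := hwT
  refine Prod.ext ?_ ?_
  · funext i j
    simp only [innerg]
    by_cases hc : i ≤ k ∧ j ≤ i
    · rw [if_pos hc, asmb_fst_low k r t w j hc.1]
    · rw [if_neg hc]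
      exact (h1 i j (fun hd => hc ⟨hd.2, hd.1⟩)).symm
  · funext i j
    simp only [innerg]
    by_cases hc : i ≤ k ∧ j ≤ i
    · rw [if_pos hc, asmb_snd_low k r t w j hc.1]
    · rw [if_neg hc]
      exact (h2 i j (fun hd => hc ⟨hd.2, hd.1⟩)).symm

omit hh hkn hr in
lemma trow_asmb (w : Pair) {t : ℕ → Bool} (ht : t ∈ Xset h k r) :
    trowf k (asmb k r t w) = t := by
  obtain ⟨hxa, hxz⟩ := ht
  funext j
  by_cases hj : j ≤ k+1
  · rw [trowf, if_pos hj, asmb_snd_top k r t w (by omega) le_rfl hj]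
  · rw [trowf, if_neg hj]
    exact (hxz j (by omega)).symm

omit hh hkn in
noncomputable def stepEquiv
    (hint : ∀ j, j ≤ k → h (k+1) j ≤ h k j ∧ h k j < h (k+1) (j+1)) :
    ↥(TT h (k+1) r) ≃ ↥(Wset h k r) × ↥(Xset h k r) where
  toFun p := (⟨innerg k p.1, innerg_mem h p.2⟩, ⟨trowf k p.1, trow_mem h p.2⟩)
  invFun q := ⟨asmb k r q.2.1 q.1.1, asmb_mem h hr q.1.2 q.2.2 hint⟩
  left_inv p := Subtype.ext (asmb_innerg h p.2)
  right_inv q := by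
    obtain ⟨⟨w, hw⟩, ⟨t, ht⟩⟩ := q
    refine Prod.ext (Subtype.ext ?_) (Subtype.ext ?_)
    · exact innerg_asmb h t hw
    · exact trow_asmb h w ht

omit hh hkn hr in
lemma rowk_of_TT {s : ℕ → ℕ} {p : Pair} (hs : s ∈ Vset h k r) (hp : p ∈ TT h k s) :
    rowk k p = s := by
  funext j
  by_cases hj : j ≤ k
  · rw [rowk, if_pos hj]
    exact hp.2.2.1 j hj
  · rw [rowk, if_neg hj]
    exact (hs.2 j (by omega)).symm

omit hh hkn hr in
noncomputable def wEquiv :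
    ↥(Wset h k r) ≃ Σ s : ↥(Vset h k r), ↥(TT h k s.1) where
  toFun p := ⟨⟨rowk k p.1, p.2.1⟩, ⟨p.1, p.2.2⟩⟩
  invFun q := ⟨q.2.1, by
    have hrs : rowk k q.2.1 = q.1.1 := rowk_of_TT h q.1.2 q.2.2
    constructor
    · rw [hrs]; exact q.1.2
    · rw [hrs]; exact q.2.2⟩
  left_inv p := Subtype.ext rfl
  right_inv q := by
    obtain ⟨⟨s, hs⟩, ⟨p, hp⟩⟩ := q
    have hrs : rowk k p = s := rowk_of_TT h hs hp
    subst hrs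
    rfl

omit hh hkn in
include hr in
lemma Vset_valid {s : ℕ → ℕ} (hs : s ∈ Vset h k r) : Valid h k s := by
  obtain ⟨hsa, hsz⟩ := hs
  have hVA : ∀ j, j ≤ k → (h k j - 1 ≤ s j ∧ s j ≤ h k j) ∧ r j ≤ s j ∧ s j < r (j+1) := by
    intro j hj
    have := hsa j hj
    simpa [VA, Set.mem_setOf_eq] using this
  refine ⟨fun j hj => (hVA j hj).1, ?_, ?_, hsz⟩
  · intro j hjk
    have a1 := (hVA j (by omega)).2.2
    have a2 := (hVA (j+1) (by omega)).2.1
    omega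
  · have b1 := (hVA 0 (by omega)).2.1
    have b2 := Valid_pos h hr 0 (by omega)
    omega

end Step3

section Base

variable {k : ℕ} {r : ℕ → ℕ}

/-- the unique element of `TT h 0 r`. -/
def basePair (r : ℕ → ℕ) : Pair :=
  (fun i j => if i = 0 ∧ j = 0 then r 0 else 0,
   fun i j => if i = 0 ∧ j = 0 then decide (h 0 0 = r 0 + 1) else false)

lemma basePair_fst (i j : ℕ) :
    (basePair h r).1 i j = if i = 0 ∧ j = 0 then r 0 else 0 := rfl

lemma basePair_snd (i j : ℕ) :
    (basePair h r).2 i j = if i = 0 ∧ j = 0 then decide (h 0 0 = r 0 + 1) else false := rfl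

lemma basePair_mem (hr : Valid h 0 r) : basePair h r ∈ TT h 0 r := by
  have hb := hr.1 0 le_rfl
  have hp := hr.2.2.1
  refine ⟨?_, ?_, ?_, ?_, ?_, ?_⟩
  · intro i j hij
    rw [basePair_fst, if_neg (fun hc => hij (by omega))]
  · intro i j hij
    rw [basePair_snd, if_neg (fun hc => hij (by omega))]
  · intro j hj
    have hz : j = 0 := by omega
    subst hz
    rw [basePair_fst, if_pos ⟨rfl, rfl⟩]
  · intro i j hji hik
    have hz : i = 0 := by omega
    have hz2 : j = 0 := by omega
    subst hz; subst hz2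
    rw [basePair_fst, if_pos ⟨rfl, rfl⟩]
    exact hp
  · intro i j hi1 hik _
    omega
  · intro i hik j hji
    have hz : i = 0 := by omega
    subst hz
    have hz2 : j = 0 := by omega
    subst hz2
    unfold shuffleRow
    rw [if_neg (fun hc => Nat.lt_irrefl 0 hc.1), if_neg (fun hc => Nat.lt_irrefl 0 hc.1)]
    have e1 : (basePair h r).1 0 0 = r 0 := by
      rw [basePair_fst, if_pos ⟨rfl, rfl⟩]
    have e2 : (basePair h r).2 0 0 = decide (h 0 0 = r 0 + 1) := by
      rw [basePair_snd, if_pos ⟨rfl, rfl⟩]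
    rw [e1, e2]
    have hcase : h 0 0 = r 0 ∨ h 0 0 = r 0 + 1 := by omega
    rcases hcase with hc | hc <;> rw [hc] <;> simp

lemma base_unique (hr : Valid h 0 r) {p : Pair} (hp : p ∈ TT h 0 r) :
    p = basePair h r := by
  have hb := hr.1 0 le_rfl
  have hpr := hr.2.2.1
  obtain ⟨h1, h2, h3, h4, h5, h6⟩ := hp
  have hg00 : p.1 0 0 = r 0 := h3 0 le_rfl
  have hsh := h6 0 le_rfl 0 le_rfl
  unfold shuffleRow at hsh
  rw [if_neg (fun hc => Nat.lt_irrefl 0 hc.1), if_neg (fun hc => Nat.lt_irrefl 0 hc.1),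
    hg00] at hsh
  refine Prod.ext ?_ ?_
  · funext i j
    rw [basePair_fst]
    by_cases hc : i = 0 ∧ j = 0
    · obtain ⟨hi, hj⟩ := hc
      subst hi; subst hj
      rw [if_pos ⟨rfl, rfl⟩]
      exact hg00
    · rw [if_neg hc]
      exact h1 i j (fun hd => hc (by omega))
  · funext i j
    rw [basePair_snd]
    by_cases hc : i = 0 ∧ j = 0
    · obtain ⟨hi, hj⟩ := hc
      subst hi; subst hj
      rw [if_pos ⟨rfl, rfl⟩]
      rcases hd : p.2 0 0 with _ | _ <;> rw [hd] at hsh <;> simp at hsh ⊢ <;> omega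
    · rw [if_neg hc]
      exact h2 i j (fun hd => hc (by omega))

noncomputable def baseEquiv (hr : Valid h 0 r) : ↥(TT h 0 r) ≃ Fin 1 where
  toFun _ := 0
  invFun _ := ⟨basePair h r, basePair_mem h hr⟩
  left_inv p := (Subtype.ext (base_unique h hr p.2)).symm
  right_inv x := by omega

end Base

lemma pow_arith (k : ℕ) : ∀ a m : ℕ, m ≤ k+1 →
    (2:ℕ)^(k+1-m) * 2^a * 2^m = 2^(a + (k+1)) := by
  intro a m hm
  rw [← pow_add, ← pow_add]
  congr 1
  omega

lemma exp_arith (k : ℕ) : (k+1) * (k+1+1) / 2 = k * (k+1) / 2 + (k+1) := by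
  have h2 : (k+1)*(k+1+1) = k*(k+1) + (k+1)*2 := by ring
  rw [h2, Nat.add_mul_div_right _ _ (by norm_num : 0 < 2)]

lemma main_count {n : ℕ} (hh : IsStaircaseTableau (n+1) h) :
    ∀ k, k ≤ n → ∀ r, Valid h k r → Nonempty (↥(TT h k r) ≃ Fin (2^(k*(k+1)/2))) := by
  intro k
  induction k with
  | zero =>
    intro _ r hr
    exact ⟨baseEquiv h hr⟩
  | succ k ih =>
    intro hkn r hr
    have hint := hInt h hh hkn
    obtain ⟨hVf, hVc⟩ := Vset_card h hh hkn hr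
    obtain ⟨hXf, hXc⟩ := Xset_card h hr
    have hfc := free_count_eq h hh hkn hr
    have eSig : (Σ s : ↥(Vset h k r), ↥(TT h k s.1)) ≃
        (Σ _ : ↥(Vset h k r), Fin (2^(k*(k+1)/2))) :=
      Equiv.sigmaCongrRight (fun s => Classical.choice (ih (by omega) s.1 (Vset_valid h hr s.2)))
    have eAll : ↥(TT h (k+1) r) ≃ (↥(Vset h k r) × Fin (2^(k*(k+1)/2))) × ↥(Xset h k r) :=
      (stepEquiv h hr hint).trans
        (Equiv.prodCongr ((wEquiv h).trans (eSig.trans (Equiv.sigmaEquivProd _ _))) (Equiv.refl _))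
    haveI := hVf
    haveI := hXf
    haveI : Finite ↥(TT h (k+1) r) := Finite.of_equiv _ eAll.symm
    refine ⟨Finite.equivFinOfCardEq ?_⟩
    rw [Nat.card_congr eAll, Nat.card_prod, Nat.card_prod, hVc, hXc, hfc]
    have hcf : Nat.card (Fin (2^(k*(k+1)/2))) = 2^(k*(k+1)/2) := Nat.card_eq_of_equiv_fin (Equiv.refl _)
    rw [hcf, exp_arith k]
    exact pow_arith k (k*(k+1)/2) (nForced h k r) (nForced_le h k r)

lemma rows_of_cond (g : ℕ → ℕ → ℕ) (ξ : ℕ → ℕ → Bool) (K : ℕ)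
    (c6 : ∀ i, i ≤ K → ∀ j, j ≤ i → shuffleRow g ξ (h (i-1)) i j = h i j) :
    ∀ i, i ≤ K → ∀ j, j ≤ i → shuffleRows g ξ i j = h i j := by
  intro i
  induction i with
  | zero =>
    intro hK j hj
    have hz : j = 0 := by omega
    subst hz
    show shuffleRow g ξ (fun _ => 0) 0 0 = h 0 0
    rw [shuffleRow_prev_congr g ξ (fun _ => 0) (h (0-1)) 0 0
      (fun j' hj' => absurd hj' (by omega)) le_rfl]
    exact c6 0 (by omega) 0 le_rfl
  | succ i ih =>
    intro hK j hj
    show shuffleRow g ξ (shuffleRows g ξ i) (i+1) j = h (i+1) j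
    rw [shuffleRow_prev_congr g ξ (shuffleRows g ξ i) (h i) (i+1) j
      (fun j' hj' => ih (by omega) j' (by omega)) hj]
    have := c6 (i+1) hK j hj
    simpa using this

lemma cond_of_rows (g : ℕ → ℕ → ℕ) (ξ : ℕ → ℕ → Bool) (K : ℕ)
    (crows : ∀ i, i ≤ K → ∀ j, j ≤ i → shuffleRows g ξ i j = h i j) :
    ∀ i, i ≤ K → ∀ j, j ≤ i → shuffleRow g ξ (h (i-1)) i j = h i j := by
  intro i hiK j hj
  cases i with
  | zero =>
    have hz : j = 0 := by omega
    subst hz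
    rw [← shuffleRow_prev_congr g ξ (fun _ => 0) (h (0-1)) 0 0
      (fun j' hj' => absurd hj' (by omega)) le_rfl]
    exact crows 0 (by omega) 0 le_rfl
  | succ i =>
    have e : shuffleRow g ξ (shuffleRows g ξ i) (i+1) j = shuffleRow g ξ (h i) (i+1) j :=
      shuffleRow_prev_congr g ξ (shuffleRows g ξ i) (h i) (i+1) j
        (fun j' hj' => crows i (by omega) j' (by omega)) hj
    simp only [Nat.add_sub_cancel]
    rw [← e]
    exact crows (i+1) hiK j hj

/-- the fixed bottom row of preimages. -/
def brow (n : ℕ) : ℕ → ℕ := fun j => if j ≤ n then 2*j+1 else 0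

lemma brow_valid {n : ℕ} (hh : IsStaircaseTableau (n+1) h) : Valid h n (brow n) := by
  have hbot := hh.2.2.1
  refine ⟨?_, ?_, ?_, ?_⟩
  · intro j hj
    have hi := hh.2.1 (n+1) j (by omega) le_rfl (by simpa using hj)
    simp only [Nat.add_sub_cancel] at hi
    have e1 : h (n+1) j = 2*j+1 := hbot j (by omega)
    have e2 : h (n+1) (j+1) = 2*(j+1)+1 := hbot (j+1) (by omega)
    rw [brow, if_pos hj]
    omega
  · intro j hj
    rw [brow, brow, if_pos (by omega : j ≤ n), if_pos (by omega : j + 1 ≤ n)]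
    omega
  · rw [brow, if_pos (by omega : 0 ≤ n)]
  · intro j hj
    rw [brow, if_neg (by omega)]

lemma final_set_eq {n : ℕ} (hh : IsStaircaseTableau (n+1) h) :
    {p : Pair | IsStaircaseTableau n p.1 ∧
        (∀ i j, ¬(j ≤ i ∧ i ≤ n) → p.2 i j = false) ∧
        HHShuffle n p.1 p.2 = h} = TT h n (brow n) := by
  ext p
  simp only [Set.mem_setOf_eq]
  constructor
  · rintro ⟨⟨g1, g2, g3, g4⟩, hxi, hsh⟩
    have hrows : ∀ i, i ≤ n → ∀ j, j ≤ i → shuffleRows p.1 p.2 i j = h i j := by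
      intro i hi j hj
      have := congrFun (congrFun hsh i) j
      rw [HHShuffle, if_pos ⟨hj, by omega⟩, if_neg (by omega)] at this
      exact this
    refine ⟨g4, hxi, ?_, g1, g2, cond_of_rows h p.1 p.2 n hrows⟩
    intro j hj
    rw [brow, if_pos hj]
    exact g3 j hj
  · rintro ⟨c1, c2, c3, c4, c5, c6⟩
    refine ⟨⟨c4, c5, ?_, c1⟩, c2, ?_⟩
    · intro j hj
      have := c3 j hj
      rw [brow, if_pos hj] at this
      exact this
    · funext i j
      rw [HHShuffle]
      by_cases hc : j ≤ i ∧ i ≤ n+1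
      · rw [if_pos hc]
        by_cases hi : i = n+1
        · rw [if_pos hi]
          subst hi
          exact (hh.2.2.1 j hc.1).symm
        · rw [if_neg hi]
          exact rows_of_cond h p.1 p.2 n c6 i (by omega) j hc.1
      · rw [if_neg hc]
        exact (hh.2.2.2 i j hc).symm

end Main

end StmtAux

/-- The half-hexagon domino shuffle preserves the uniform distribution: for every
`h ∈ ST(n+1)`, the number of pairs `(g, ξ)` with `g ∈ ST(n)` and `ξ ∈ {0,1}^{I_n}`
(encoded as `ξ : ℕ → ℕ → Bool` vanishing off `I_n = {(i,j) : 0 ≤ j ≤ i ≤ n}`) such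
that `A(g, ξ) = h` equals `2^(n(n+1)/2)`; in particular it is the same for every `h`. -/
theorem stmt10 (n : ℕ) (h : ℕ → ℕ → ℕ) (hh : IsStaircaseTableau (n + 1) h) :
    {p : (ℕ → ℕ → ℕ) × (ℕ → ℕ → Bool) |
        IsStaircaseTableau n p.1 ∧
        (∀ i j, ¬(j ≤ i ∧ i ≤ n) → p.2 i j = false) ∧
        HHShuffle n p.1 p.2 = h}.ncard = 2 ^ (n * (n + 1) / 2) := by
  rw [StmtAux.final_set_eq h hh, ← Nat.card_coe_set_eq,
    Nat.card_eq_of_equiv_fin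
      (Classical.choice (StmtAux.main_count h hh n le_rfl (StmtAux.brow n)
        (StmtAux.brow_valid h hh)))]
end

section
/- For every n ≥ 0, the cardinality of ST(n+1) equals 2^{n+1} times the cardinality of ST(n). -/
open Finset

namespace StaircaseTableau

def padRow (n : ℕ) : (Fin n → ℕ) ↪ (ℕ → ℕ) where
  toFun f j := if h : j < n then f ⟨j, h⟩ else 0
  inj' f f' hf := funext fun j => by simpa using congrFun hf j

theorem padRow_apply (n : ℕ) (f : Fin n → ℕ) (j : ℕ) :
    padRow n f j = if h : j < n then f ⟨j, h⟩ else 0 := rfl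

/-- Rows are functions `ℕ → ℕ` vanishing from index `n` on, like the rows of a tableau. -/
def rowBox (n : ℕ) (I : ℕ → Finset ℕ) : Finset (ℕ → ℕ) :=
  (Fintype.piFinset fun j : Fin n => I j).map (padRow n)

theorem mem_rowBox {n : ℕ} {I : ℕ → Finset ℕ} {y : ℕ → ℕ} :
    y ∈ rowBox n I ↔ (∀ j < n, y j ∈ I j) ∧ ∀ j, n ≤ j → y j = 0 := by
  simp only [rowBox, mem_map, Fintype.mem_piFinset, funext_iff, padRow_apply]
  constructor
  · rintro ⟨f, hf, hy⟩
    refine ⟨fun j hj => ?_, fun j hj => ?_⟩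
    · simpa [← hy, hj] using hf ⟨j, hj⟩
    · simp [← hy, hj.not_gt]
  · rintro ⟨hI, hzero⟩
    refine ⟨fun j => y j, fun j => hI j j.isLt, fun j => ?_⟩
    split_ifs with hj
    · rfl
    · exact (hzero j (not_lt.mp hj)).symm

theorem card_rowBox (n : ℕ) (I : ℕ → Finset ℕ) : #(rowBox n I) = ∏ j ∈ range n, #(I j) := by
  rw [rowBox, card_map, Fintype.card_piFinset, Fin.prod_univ_eq_prod_range (fun j => #(I j))]

theorem filter_rowBox (n : ℕ) (I : ℕ → Finset ℕ) (P : ℕ → ℕ → Prop) [∀ j, DecidablePred (P j)] :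
    (rowBox n I).filter (fun y => ∀ j < n, P j (y j)) = rowBox n fun j => (I j).filter (P j) := by
  ext y
  simp only [mem_filter, mem_rowBox]
  constructor
  · rintro ⟨⟨hI, hzero⟩, hP⟩
    exact ⟨fun j hj => ⟨hI j hj, hP j hj⟩, hzero⟩
  · rintro ⟨hIP, hzero⟩
    exact ⟨⟨fun j hj => (hIP j hj).1, hzero⟩, fun j hj => (hIP j hj).2⟩

theorem card_filter_pair (c : ℕ) (P : ℕ → Prop) [DecidablePred P] :
    #(({c, c + 1} : Finset ℕ).filter P) =
      (if P c then 1 else 0) + (if P (c + 1) then 1 else 0) := by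
  rw [card_filter, sum_pair (by omega)]

theorem sum_sum_eq_sum_card_filter_mul {α β : Type*} (s : Finset α) (t : α → Finset β)
    (T : Finset β) (hT : ∀ a ∈ s, t a ⊆ T) (f : β → ℕ) [∀ b, DecidablePred (b ∈ t ·)] :
    ∑ a ∈ s, ∑ b ∈ t a, f b = ∑ b ∈ T, #(s.filter (b ∈ t ·)) * f b := by
  rw [sum_comm' (t' := T) (s' := fun b => s.filter (b ∈ t ·))]
  · simp only [sum_const, smul_eq_mul]
  · intro a b
    simp only [mem_filter]
    exact ⟨fun h => ⟨h, hT a h.1 h.2⟩, fun h => h.1⟩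

/-- Both sides multiply neighbours in the `0`/`1` sequence `a 0, b 0, a 1, b 1, …`, whose zeros are
isolated: a factor is `2` or `1` according as both terms are `1`, and each zero spoils exactly one
factor on either side. -/
theorem prod_add_eq_mul_prod_add_succ (n : ℕ) (a b : ℕ → ℕ) (ha : ∀ j, a j ≤ 1)
    (hb : ∀ j, b j ≤ 1) (ha0 : a 0 = 1) (hab : ∀ j ≤ n, 1 ≤ a j + b j)
    (hba : ∀ j < n, 1 ≤ b j + a (j + 1)) :
    ∏ j ∈ range (n + 1), (a j + b j) = (1 + b n) * ∏ j ∈ range n, (b j + a (j + 1)) := by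
  induction n with
  | zero => simp [ha0]
  | succ n ih =>
    rw [prod_range_succ, ih (fun j hj => hab j (by omega)) (fun j hj => hba j (by omega)),
      prod_range_succ]
    have key : (1 + b n) * (a (n + 1) + b (n + 1)) = (1 + b (n + 1)) * (b n + a (n + 1)) := by
      have := hab (n + 1) le_rfl
      have := hba n (by omega)
      have := ha (n + 1); have := hb n; have := hb (n + 1)
      interval_cases b n <;> interval_cases b (n + 1) <;> interval_cases a (n + 1) <;> omega
    calc (1 + b n) * (∏ j ∈ range n, (b j + a (j + 1))) * (a (n + 1) + b (n + 1))
        = (1 + b n) * (a (n + 1) + b (n + 1)) * ∏ j ∈ range n, (b j + a (j + 1)) := by ring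
      _ = _ := by rw [key]; ring

structure IsStaircaseArray (m : ℕ) (x : ℕ → ℕ) (g : ℕ → ℕ → ℕ) : Prop where
  interlace : ∀ i < m, ∀ j ≤ i, g (i + 1) j ≤ g i j ∧ g i j < g (i + 1) (j + 1)
  bottom : ∀ j ≤ m, g m j = x j
  eq_zero : ∀ i j, ¬(j ≤ i ∧ i ≤ m) → g i j = 0

def rowsAbove (n : ℕ) (x : ℕ → ℕ) : Finset (ℕ → ℕ) :=
  rowBox n fun j => Ico (x j) (x (j + 1))

def unitCube (n : ℕ) (x : ℕ → ℕ) : Finset (ℕ → ℕ) :=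
  rowBox n fun j => {x j, x j + 1}

def glue (m : ℕ) (x : ℕ → ℕ) (h : ℕ → ℕ → ℕ) : ℕ → ℕ → ℕ :=
  fun i j => if i = m ∧ j ≤ m then x j else h i j

open Classical in
noncomputable def arrays : ℕ → (ℕ → ℕ) → Finset (ℕ → ℕ → ℕ)
  | 0, x => {glue 0 x 0}
  | m + 1, x => (rowsAbove (m + 1) x).biUnion fun s => (arrays m s).image (glue (m + 1) x)

namespace IsStaircaseArray

variable {m : ℕ} {x : ℕ → ℕ} {g : ℕ → ℕ → ℕ}

theorem bottom_lt (hg : IsStaircaseArray m x g) {j : ℕ} (hj : j < m) : x j < x (j + 1) := by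
  obtain ⟨m, rfl⟩ : ∃ k, m = k + 1 := ⟨m - 1, by omega⟩
  have := hg.interlace m (by omega) j (by omega)
  rw [hg.bottom j (by omega), hg.bottom (j + 1) (by omega)] at this
  omega

theorem bottom_le (hg : IsStaircaseArray m x g) {i j : ℕ} (hji : j ≤ i) (him : i ≤ m) :
    x j ≤ g i j := by
  revert hji
  induction him using Nat.decreasingInduction with
  | self => exact fun hji => (hg.bottom j hji).ge
  | of_succ i hi ih => exact fun hji => (ih (by omega)).trans (hg.interlace i hi j hji).1

theorem row_eq (hg : IsStaircaseArray m x g) (hx : ∀ j, m < j → x j = 0) : g m = x := by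
  funext j
  by_cases hj : j ≤ m
  · exact hg.bottom j hj
  · rw [hg.eq_zero m j (by omega), hx j (by omega)]

theorem row_mem_rowsAbove (hg : IsStaircaseArray (m + 1) x g) : g m ∈ rowsAbove (m + 1) x := by
  refine mem_rowBox.mpr ⟨fun j hj => ?_, fun j hj => hg.eq_zero m j (by omega)⟩
  have := hg.interlace m (by omega) j (by omega)
  rw [hg.bottom j (by omega), hg.bottom (j + 1) (by omega)] at this
  exact mem_Ico.mpr this

theorem update (hg : IsStaircaseArray (m + 1) x g) :
    IsStaircaseArray m (g m) (Function.update g (m + 1) 0) where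
  interlace i hi j hj := by
    simpa [Function.update_of_ne (show i + 1 ≠ m + 1 by omega),
      Function.update_of_ne (show i ≠ m + 1 by omega)] using hg.interlace i (by omega) j hj
  bottom j _ := by rw [Function.update_of_ne (by omega)]
  eq_zero i j hij := by
    by_cases hi : i = m + 1
    · simp [hi]
    · rw [Function.update_of_ne hi]
      exact hg.eq_zero i j (by omega)

theorem glue_update (hg : IsStaircaseArray (m + 1) x g) :
    glue (m + 1) x (Function.update g (m + 1) 0) = g := by
  funext i j
  by_cases hij : i = m + 1 ∧ j ≤ m + 1
  · rw [glue, if_pos hij, hij.1, hg.bottom j hij.2]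
  · rw [glue, if_neg hij]
    by_cases hi : i = m + 1
    · simp only [hi, Function.update_self, Pi.zero_apply]
      exact (hg.eq_zero _ j (by omega)).symm
    · rw [Function.update_of_ne hi]

end IsStaircaseArray

theorem isStaircaseArray_glue_zero (x : ℕ → ℕ) : IsStaircaseArray 0 x (glue 0 x 0) where
  interlace i hi := absurd hi (Nat.not_lt_zero i)
  bottom j hj := if_pos ⟨rfl, hj⟩
  eq_zero i j hij := by rw [glue, if_neg (by omega), Pi.zero_apply, Pi.zero_apply]

theorem IsStaircaseArray.eq_glue_zero {x : ℕ → ℕ} {g : ℕ → ℕ → ℕ}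
    (hg : IsStaircaseArray 0 x g) : g = glue 0 x 0 := by
  funext i j
  by_cases hij : i = 0 ∧ j ≤ 0
  · rw [glue, if_pos hij, hij.1, hg.bottom j hij.2]
  · rw [glue, if_neg hij, hg.eq_zero i j (by omega), Pi.zero_apply, Pi.zero_apply]

theorem isStaircaseArray_glue {m : ℕ} {x s : ℕ → ℕ} {h : ℕ → ℕ → ℕ}
    (hs : s ∈ rowsAbove (m + 1) x) (hh : IsStaircaseArray m s h) :
    IsStaircaseArray (m + 1) x (glue (m + 1) x h) where
  interlace i hi j hj := by
    simp only [glue]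
    obtain him | rfl : i < m ∨ i = m := by omega
    · rw [if_neg (by omega), if_neg (by omega), if_neg (by omega)]
      exact hh.interlace i him j hj
    · rw [if_pos ⟨rfl, by omega⟩, if_neg (by omega), if_pos ⟨rfl, by omega⟩, hh.bottom j hj]
      exact mem_Ico.mp ((mem_rowBox.mp hs).1 j (by omega))
  bottom j hj := if_pos ⟨rfl, hj⟩
  eq_zero i j hij := by
    rw [glue, if_neg (by omega)]
    exact hh.eq_zero i j (by omega)

theorem mem_arrays {m : ℕ} {x : ℕ → ℕ} {g : ℕ → ℕ → ℕ} :
    g ∈ arrays m x ↔ IsStaircaseArray m x g := by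
  induction m generalizing x g with
  | zero =>
    rw [arrays, mem_singleton]
    exact ⟨fun h => h ▸ isStaircaseArray_glue_zero x, IsStaircaseArray.eq_glue_zero⟩
  | succ m ih =>
    simp only [arrays, mem_biUnion, mem_image, ih]
    constructor
    · rintro ⟨s, hs, h, hh, rfl⟩
      exact isStaircaseArray_glue hs hh
    · intro hg
      exact ⟨g m, hg.row_mem_rowsAbove, _, hg.update, hg.glue_update⟩

theorem card_arrays_succ (m : ℕ) (x : ℕ → ℕ) :
    #(arrays (m + 1) x) = ∑ s ∈ rowsAbove (m + 1) x, #(arrays m s) := by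
  classical
  rw [arrays, card_biUnion]
  · refine sum_congr rfl fun s _ => card_image_of_injOn fun h hh h' hh' he => ?_
    have hh := mem_arrays.mp hh
    have hh' := mem_arrays.mp hh'
    funext i j
    have := congrFun (congrFun he i) j
    by_cases hij : i = m + 1 ∧ j ≤ m + 1
    · rw [hh.eq_zero i j (by omega), hh'.eq_zero i j (by omega)]
    · simpa [glue, hij] using this
  · intro s hs s' hs' hne
    refine disjoint_left.mpr fun g hg hg' => hne ?_
    obtain ⟨h, hh, rfl⟩ := mem_image.mp hg
    obtain ⟨h', hh', he⟩ := mem_image.mp hg'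
    have row_eq : ∀ {t k} (ht : t ∈ rowsAbove (m + 1) x) (hk : IsStaircaseArray m t k),
        glue (m + 1) x k m = t := fun ht hk =>
      (funext fun j => if_neg (by omega)).trans (hk.row_eq fun j hj => (mem_rowBox.mp ht).2 j hj)
    rw [← row_eq hs (mem_arrays.mp hh), ← he, row_eq hs' (mem_arrays.mp hh')]

theorem lt_succ_of_mem_rowsAbove {m : ℕ} {x s : ℕ → ℕ} (hs : s ∈ rowsAbove (m + 1) x)
    {j : ℕ} (hj : j < m) : s j < s (j + 1) := by
  have h₁ := mem_Ico.mp ((mem_rowBox.mp hs).1 j (by omega))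
  have h₂ := mem_Ico.mp ((mem_rowBox.mp hs).1 (j + 1) (by omega))
  omega

theorem mem_rowsAbove_iff {m : ℕ} {y t : ℕ → ℕ} (ht : ∀ j, m + 1 ≤ j → t j = 0) :
    t ∈ rowsAbove (m + 1) y ↔
      ∀ j < m + 2, (j ≤ m → y j ≤ t j) ∧ (0 < j → t (j - 1) < y j) := by
  simp only [rowsAbove, mem_rowBox, mem_Ico]
  constructor
  · rintro ⟨h, -⟩ j hj
    refine ⟨fun hjm => (h j (by omega)).1, fun hj0 => ?_⟩
    simpa [Nat.sub_add_cancel hj0] using (h (j - 1) (by omega)).2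
  · intro h
    exact ⟨fun j hj => ⟨(h j (by omega)).1 (by omega),
      by simpa using (h (j + 1) (by omega)).2 (by omega)⟩, ht⟩

section LocalCount

variable {m : ℕ} {x t : ℕ → ℕ}

open Classical in
theorem card_filter_unitCube_eq_prod (ht : t ∈ rowBox (m + 1) fun j => Icc (x j) (x (j + 1))) :
    #((unitCube (m + 2) x).filter (t ∈ rowsAbove (m + 1) ·)) =
      ∏ j ∈ range (m + 2),
        ((if j = 0 ∨ t (j - 1) < x j then 1 else 0) + if j = m + 1 ∨ x j < t j then 1 else 0) := by
  obtain ⟨htI, htzero⟩ := mem_rowBox.mp ht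
  simp only [mem_Icc] at htI
  rw [filter_congr fun y _ => mem_rowsAbove_iff htzero, unitCube,
    filter_rowBox (P := fun j c => (j ≤ m → c ≤ t j) ∧ (0 < j → t (j - 1) < c)), card_rowBox]
  refine prod_congr rfl fun j hj => ?_
  rw [mem_range] at hj
  rw [card_filter_pair]
  have := htI j
  rcases j with _ | j
  · simp only [zero_le, forall_const, lt_self_iff_false, IsEmpty.forall_iff, and_true,
      true_or, if_true, Nat.zero_ne_add_one, false_or]
    split_ifs <;> omega
  · have := htI j
    simp only [Nat.add_sub_cancel, Nat.add_one_ne_zero, false_or, Nat.zero_lt_succ,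
      forall_const]
    split_ifs <;> omega

open Classical in
theorem card_filter_rowsAbove_eq_prod (ht : t ∈ rowBox (m + 1) fun j => Icc (x j) (x (j + 1))) :
    #((rowsAbove (m + 1) x).filter (t ∈ unitCube (m + 1) ·)) =
      ∏ j ∈ range (m + 1), ((if x j < t j then 1 else 0) + if t j < x (j + 1) then 1 else 0) := by
  obtain ⟨htI, htzero⟩ := mem_rowBox.mp ht
  have hmem : ∀ s, t ∈ unitCube (m + 1) s ↔ ∀ j < m + 1, t j = s j ∨ t j = s j + 1 := by
    intro s
    simp only [unitCube, mem_rowBox, mem_insert, mem_singleton]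
    exact ⟨fun h => h.1, fun h => ⟨h, htzero⟩⟩
  rw [filter_congr fun s _ => hmem s, rowsAbove,
    filter_rowBox (P := fun j c => t j = c ∨ t j = c + 1), card_rowBox]
  refine prod_congr rfl fun j hj => ?_
  have hIco : (Ico (x j) (x (j + 1))).filter (fun c => t j = c ∨ t j = c + 1) =
      Ico (max (x j) (t j - 1)) (min (x (j + 1)) (t j + 1)) := by
    ext c
    simp only [mem_filter, mem_Ico]
    omega
  have := mem_Icc.mp (htI j (mem_range.mp hj))
  rw [hIco, Nat.card_Ico, max_def, min_def]
  split_ifs <;> omega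

open Classical in
theorem card_filter_unitCube_mem_rowsAbove (hx : ∀ j < m + 1, x j < x (j + 1))
    (ht : t ∈ rowBox (m + 1) fun j => Icc (x j) (x (j + 1)))
    (hmono : ∀ j < m, t j < t (j + 1)) :
    #((unitCube (m + 2) x).filter (t ∈ rowsAbove (m + 1) ·)) =
      2 * #((rowsAbove (m + 1) x).filter (t ∈ unitCube (m + 1) ·)) := by
  have htI := fun j hj => mem_Icc.mp ((mem_rowBox.mp ht).1 j hj)
  -- `a j` and `b j` record whether `y j = x j`, resp. `y j = x j + 1`, is allowed below `t`.
  set a : ℕ → ℕ := fun j => if j = 0 ∨ t (j - 1) < x j then 1 else 0 with ha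
  set b : ℕ → ℕ := fun j => if j = m + 1 ∨ x j < t j then 1 else 0 with hb
  rw [card_filter_unitCube_eq_prod ht, card_filter_rowsAbove_eq_prod ht,
    prod_add_eq_mul_prod_add_succ (m + 1) a b]
  · refine congrArg₂ _ (by simp [hb]) (prod_congr rfl fun j hj => ?_)
    simp [ha, hb, (mem_range.mp hj).ne]
  · intro j
    simp only [ha]
    split_ifs <;> omega
  · intro j
    simp only [hb]
    split_ifs <;> omega
  · simp [ha]
  · rintro (_ | j) hj
    · simp [ha]
    · have := htI j (by omega)
      have := hmono j
      simp only [ha, hb, Nat.add_sub_cancel, Nat.add_one_ne_zero, false_or]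
      split_ifs <;> omega
  · intro j hj
    have := htI j hj
    have := hx j hj
    simp only [ha, hb, Nat.add_sub_cancel, Nat.add_one_ne_zero, false_or]
    split_ifs <;> omega

end LocalCount

theorem sum_unitCube_sum_rowsAbove {m : ℕ} {x : ℕ → ℕ} (hx : ∀ j < m + 1, x j < x (j + 1))
    (f : (ℕ → ℕ) → ℕ) (hf : ∀ t, f t ≠ 0 → ∀ j < m, t j < t (j + 1)) :
    ∑ y ∈ unitCube (m + 2) x, ∑ t ∈ rowsAbove (m + 1) y, f t =
      2 * ∑ s ∈ rowsAbove (m + 1) x, ∑ t ∈ unitCube (m + 1) s, f t := by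
  classical
  set T := rowBox (m + 1) fun j => Icc (x j) (x (j + 1))
  rw [sum_sum_eq_sum_card_filter_mul _ _ T, sum_sum_eq_sum_card_filter_mul _ _ T, mul_sum]
  · refine sum_congr rfl fun t ht => ?_
    by_cases h : f t = 0
    · simp [h]
    · rw [card_filter_unitCube_mem_rowsAbove hx ht (hf t h), mul_assoc]
  · intro s hs t ht
    obtain ⟨hsI, -⟩ := mem_rowBox.mp hs
    obtain ⟨htI, htzero⟩ := mem_rowBox.mp ht
    refine mem_rowBox.mpr ⟨fun j hj => ?_, htzero⟩
    have := mem_Ico.mp (hsI j hj)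
    have := htI j hj
    simp only [mem_insert, mem_singleton] at this
    exact mem_Icc.mpr (by omega)
  · intro y hy t ht
    obtain ⟨hyI, -⟩ := mem_rowBox.mp hy
    obtain ⟨htI, htzero⟩ := mem_rowBox.mp ht
    refine mem_rowBox.mpr ⟨fun j hj => ?_, htzero⟩
    have h₁ := hyI j (by omega)
    have h₂ := hyI (j + 1) (by omega)
    have := mem_Ico.mp (htI j hj)
    simp only [mem_insert, mem_singleton] at h₁ h₂
    exact mem_Icc.mpr (by omega)

theorem sum_card_arrays_unitCube (m : ℕ) (x : ℕ → ℕ) (hx : ∀ j < m, x j < x (j + 1)) :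
    ∑ y ∈ unitCube (m + 1) x, #(arrays m y) = 2 ^ (m + 1) * #(arrays m x) := by
  induction m generalizing x with
  | zero => simp [arrays, unitCube, card_rowBox]
  | succ m ih =>
    have hvanish : ∀ t, #(arrays m t) ≠ 0 → ∀ j < m, t j < t (j + 1) := fun t ht j hj => by
      obtain ⟨g, hg⟩ := card_ne_zero.mp ht
      exact (mem_arrays.mp hg).bottom_lt hj
    calc ∑ y ∈ unitCube (m + 2) x, #(arrays (m + 1) y)
        = ∑ y ∈ unitCube (m + 2) x, ∑ t ∈ rowsAbove (m + 1) y, #(arrays m t) :=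
          sum_congr rfl fun y _ => card_arrays_succ m y
      _ = 2 * ∑ s ∈ rowsAbove (m + 1) x, ∑ t ∈ unitCube (m + 1) s, #(arrays m t) :=
          sum_unitCube_sum_rowsAbove hx _ hvanish
      _ = 2 * ∑ s ∈ rowsAbove (m + 1) x, 2 ^ (m + 1) * #(arrays m s) := by
          congr 1
          exact sum_congr rfl fun s hs => ih s fun j hj => lt_succ_of_mem_rowsAbove hs hj
      _ = 2 ^ (m + 2) * #(arrays (m + 1) x) := by
          rw [card_arrays_succ, ← mul_sum, ← mul_assoc, ← pow_succ']

theorem isStaircaseTableau_iff (n : ℕ) (g : ℕ → ℕ → ℕ) :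
    IsStaircaseTableau n g ↔ IsStaircaseArray n (fun j => 2 * j + 1) g := by
  constructor
  · rintro ⟨-, hinter, hbottom, hzero⟩
    exact ⟨fun i hi j hj => hinter (i + 1) j (by omega) (by omega) (by omega), hbottom, hzero⟩
  · intro hg
    refine ⟨fun i j hji hin => ?_, fun i j hi hin hj => ?_, hg.bottom, hg.eq_zero⟩
    · have := hg.bottom_le hji hin
      omega
    · obtain ⟨i, rfl⟩ : ∃ k, i = k + 1 := ⟨i - 1, by omega⟩
      exact hg.interlace i (by omega) j (by omega)

theorem ncard_setOf_isStaircaseTableau (n : ℕ) :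
    {g | IsStaircaseTableau n g}.ncard = #(arrays n fun j => 2 * j + 1) := by
  rw [← Set.ncard_coe_finset]
  congr 1
  ext g
  rw [Set.mem_ofPred_eq, isStaircaseTableau_iff, mem_coe, mem_arrays]

theorem rowsAbove_odd (n : ℕ) :
    rowsAbove n (fun j => 2 * j + 1) = unitCube n (fun j => 2 * j + 1) := by
  unfold rowsAbove unitCube
  congr 1
  funext j
  ext c
  simp only [mem_Ico, mem_insert, mem_singleton]
  omega

end StaircaseTableau

/-- For every `n ≥ 0`, `|ST(n+1)| = 2^(n+1) · |ST(n)|`. -/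
theorem stmt11 (n : ℕ) :
    {g : ℕ → ℕ → ℕ | IsStaircaseTableau (n + 1) g}.ncard =
      2 ^ (n + 1) * {g : ℕ → ℕ → ℕ | IsStaircaseTableau n g}.ncard := by
  open StaircaseTableau in
  calc {g | IsStaircaseTableau (n + 1) g}.ncard
      = ∑ s ∈ unitCube (n + 1) (fun j => 2 * j + 1), #(arrays n s) := by
        rw [ncard_setOf_isStaircaseTableau, card_arrays_succ, rowsAbove_odd]
    _ = 2 ^ (n + 1) * #(arrays n fun j => 2 * j + 1) :=
        sum_card_arrays_unitCube n _ fun j _ => by omega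
    _ = 2 ^ (n + 1) * {g | IsStaircaseTableau n g}.ncard := by
        rw [ncard_setOf_isStaircaseTableau]
end

section
/- A height function determines its tiling uniquely: if R is a finite set of unit lattice squares, T₁ and T₂ are domino tilings of R, and h is simultaneously a height function for T₁ and for T₂, then T₁ = T₂. -/
/-- The unit square indexed by `p = (a, b)` is `[a, a+1] × [b, b+1]`.  Two squares are
adjacent when they share a common edge. -/
def SqAdj (p q : ℤ × ℤ) : Prop := |p.1 - q.1| + |p.2 - q.2| = 1

/-- `f` encodes a domino tiling of the region `R` (a set of unit lattice squares):
it pairs each square of `R` with a distinct adjacent square of `R`, involutively,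
and fixes everything outside `R`.  Such involutions correspond exactly to partitions
of the squares of `R` into dominoes (pairs of squares sharing an edge). -/
def IsDominoTiling (R : Set (ℤ × ℤ)) (f : ℤ × ℤ → ℤ × ℤ) : Prop :=
  (∀ p ∈ R, f p ∈ R ∧ f p ≠ p ∧ SqAdj p (f p) ∧ f (f p) = p) ∧
  (∀ p ∉ R, f p = p)

/-- `h : ℤ² → ℤ` is a height function for the domino tiling `f` of the region `R`.
Color the squares of `ℤ²` in chessboard fashion, the square `[a, a+1] × [b, b+1]` being
black iff `a + b` is even.  The condition: for every lattice edge of `R` (a unit segment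
which is a side of some square of `R`) that does not cross a domino of the tiling
(i.e. such that the two squares on either side of it do not both belong to `R` and get
paired together), traversing the edge with a black square on its left increases `h` by
exactly `1`.

The vertical edge from `(x, y)` to `(x, y+1)` has the squares `(x-1, y)` (left) and
`(x, y)` (right) on its sides; traversing it upward has a black square on the left iff
`x + y` is odd.  The horizontal edge from `(x, y)` to `(x+1, y)` has the squares
`(x, y)` (above) and `(x, y-1)` (below) on its sides; traversing it rightward has a
black square on the left iff `x + y` is even. -/
def IsHeightFunction (R : Set (ℤ × ℤ)) (f : ℤ × ℤ → ℤ × ℤ) (h : ℤ × ℤ → ℤ) : Prop :=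
  (∀ x y : ℤ,
    ((x - 1, y) ∈ R ∨ (x, y) ∈ R) →
    ¬((x - 1, y) ∈ R ∧ (x, y) ∈ R ∧ f (x - 1, y) = (x, y)) →
    (if Odd (x + y) then h (x, y + 1) = h (x, y) + 1 else h (x, y) = h (x, y + 1) + 1)) ∧
  (∀ x y : ℤ,
    ((x, y - 1) ∈ R ∨ (x, y) ∈ R) →
    ¬((x, y - 1) ∈ R ∧ (x, y) ∈ R ∧ f (x, y - 1) = (x, y)) →
    (if Even (x + y) then h (x + 1, y) = h (x, y) + 1 else h (x, y) = h (x + 1, y) + 1))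

lemma edges_aux {R : Set (ℤ × ℤ)} {f : ℤ × ℤ → ℤ × ℤ} {h : ℤ × ℤ → ℤ}
    (hf : IsDominoTiling R f) (hh : IsHeightFunction R f h)
    {a b : ℤ} (hp : (a, b) ∈ R) :
    (f (a, b) ≠ (a, b - 1) →
      (if Even (a + b) then h (a + 1, b) = h (a, b) + 1 else h (a, b) = h (a + 1, b) + 1)) ∧
    (f (a, b) ≠ (a, b + 1) →
      (if Even (a + (b + 1)) then h (a + 1, b + 1) = h (a, b + 1) + 1
        else h (a, b + 1) = h (a + 1, b + 1) + 1)) ∧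
    (f (a, b) ≠ (a - 1, b) →
      (if Odd (a + b) then h (a, b + 1) = h (a, b) + 1 else h (a, b) = h (a, b + 1) + 1)) ∧
    (f (a, b) ≠ (a + 1, b) →
      (if Odd (a + 1 + b) then h (a + 1, b + 1) = h (a + 1, b) + 1
        else h (a + 1, b) = h (a + 1, b + 1) + 1)) := by
  refine ⟨fun hne => ?_, fun hne => ?_, fun hne => ?_, fun hne => ?_⟩
  · exact hh.2 a b (Or.inr hp)
      (fun ⟨h1, h2, h3⟩ => hne (by rw [← (hf.1 _ h1).2.2.2, h3]))
  · have key := hh.2 a (b + 1)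
    rw [show b + 1 - 1 = b from by ring] at key
    exact key (Or.inl hp) (fun ⟨h1, h2, h3⟩ => hne h3)
  · exact hh.1 a b (Or.inr hp)
      (fun ⟨h1, h2, h3⟩ => hne (by rw [← (hf.1 _ h1).2.2.2, h3]))
  · have key := hh.1 (a + 1) b
    rw [show a + 1 - 1 = a from by ring] at key
    exact key (Or.inl hp) (fun ⟨h1, h2, h3⟩ => hne h3)

/-- A height function determines its tiling uniquely: if `R` is a finite region,
`f₁`, `f₂` are domino tilings of `R`, and `h` is simultaneously a height function for
`f₁` and for `f₂`, then `f₁ = f₂`. -/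
theorem stmt13 (R : Set (ℤ × ℤ)) (hR : R.Finite) (f₁ f₂ : ℤ × ℤ → ℤ × ℤ)
    (hf₁ : IsDominoTiling R f₁) (hf₂ : IsDominoTiling R f₂) (h : ℤ × ℤ → ℤ)
    (hh₁ : IsHeightFunction R f₁ h) (hh₂ : IsHeightFunction R f₂ h) : f₁ = f₂ := by
  funext p
  by_cases hp : p ∈ R
  · by_contra hne
    obtain ⟨a, b⟩ := p
    have e1 := edges_aux hf₁ hh₁ hp
    have e2 := edges_aux hf₂ hh₂ hp
    have hB : (if Even (a + b) then h (a + 1, b) = h (a, b) + 1 else h (a, b) = h (a + 1, b) + 1) := by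
      by_cases hc : f₂ (a, b) = (a, b - 1)
      · exact e1.1 (fun heq => hne (heq.trans hc.symm))
      · exact e2.1 hc
    have hT : (if Even (a + (b + 1)) then h (a + 1, b + 1) = h (a, b + 1) + 1 else h (a, b + 1) = h (a + 1, b + 1) + 1) := by
      by_cases hc : f₂ (a, b) = (a, b + 1)
      · exact e1.2.1 (fun heq => hne (heq.trans hc.symm))
      · exact e2.2.1 hc
    have hL : (if Odd (a + b) then h (a, b + 1) = h (a, b) + 1 else h (a, b) = h (a, b + 1) + 1) := by
      by_cases hc : f₂ (a, b) = (a - 1, b)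
      · exact e1.2.2.1 (fun heq => hne (heq.trans hc.symm))
      · exact e2.2.2.1 hc
    have hRt : (if Odd (a + 1 + b) then h (a + 1, b + 1) = h (a + 1, b) + 1 else h (a + 1, b) = h (a + 1, b + 1) + 1) := by
      by_cases hc : f₂ (a, b) = (a + 1, b)
      · exact e1.2.2.2 (fun heq => hne (heq.trans hc.symm))
      · exact e2.2.2.2 hc
    rw [show a + (b + 1) = (a + b) + 1 from by ring] at hT
    rw [show a + 1 + b = (a + b) + 1 from by ring] at hRt
    rcases Int.even_or_odd (a + b) with he | ho
    · rw [if_pos he] at hB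
      rw [if_neg (by simpa [Int.even_add_one] using he)] at hT
      rw [if_neg (Int.not_odd_iff_even.mpr he)] at hL
      rw [if_pos he.add_one] at hRt
      omega
    · rw [if_neg (Int.not_even_iff_odd.mpr ho)] at hB
      rw [if_pos ho.add_one] at hT
      rw [if_pos ho] at hL
      rw [if_neg (Int.not_odd_iff_even.mpr ho.add_one)] at hRt
      omega
  · rw [hf₁.2 p hp, hf₂.2 p hp]
end

section
/- Two height functions for the same tiling differ by a constant: if R is a finite edge-connected set of unit lattice squares (a polyomino), T is a domino tiling of R, and h₁, h₂ are both height functions for T, then there is a constant c ∈ ℤ with h₁(v) = h₂(v) + c for every lattice point v of R. -/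
/-- `R` is edge-connected: any two of its squares are joined by a chain of squares of
`R` in which consecutive squares share an edge. -/
def EdgeConnected (R : Set (ℤ × ℤ)) : Prop :=
  ∀ p ∈ R, ∀ q ∈ R, Relation.ReflTransGen (fun a b => a ∈ R ∧ b ∈ R ∧ SqAdj a b) p q

/-- `v` is a lattice point of the region `R`: a corner of some square of `R`. -/
def IsLatticePoint (R : Set (ℤ × ℤ)) (v : ℤ × ℤ) : Prop :=
  ∃ s ∈ R, (v.1 = s.1 ∨ v.1 = s.1 + 1) ∧ (v.2 = s.2 ∨ v.2 = s.2 + 1)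

section Aux

variable {R : Set (ℤ × ℤ)} {f : ℤ × ℤ → ℤ × ℤ} {h₁ h₂ : ℤ × ℤ → ℤ}

lemma vert_eq (hh₁ : IsHeightFunction R f h₁) (hh₂ : IsHeightFunction R f h₂)
    (x y : ℤ) (hmem : (x - 1, y) ∈ R ∨ (x, y) ∈ R)
    (hnc : ¬((x - 1, y) ∈ R ∧ (x, y) ∈ R ∧ f (x - 1, y) = (x, y))) :
    h₁ (x, y + 1) - h₂ (x, y + 1) = h₁ (x, y) - h₂ (x, y) := by
  have e1 := hh₁.1 x y hmem hnc
  have e2 := hh₂.1 x y hmem hnc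
  by_cases hp : Odd (x + y) <;> simp [hp] at e1 e2 <;> omega

lemma horiz_eq (hh₁ : IsHeightFunction R f h₁) (hh₂ : IsHeightFunction R f h₂)
    (x y : ℤ) (hmem : (x, y - 1) ∈ R ∨ (x, y) ∈ R)
    (hnc : ¬((x, y - 1) ∈ R ∧ (x, y) ∈ R ∧ f (x, y - 1) = (x, y))) :
    h₁ (x + 1, y) - h₂ (x + 1, y) = h₁ (x, y) - h₂ (x, y) := by
  have e1 := hh₁.2 x y hmem hnc
  have e2 := hh₂.2 x y hmem hnc
  by_cases hp : Even (x + y) <;> simp [hp] at e1 e2 <;> omega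

lemma square_eq (hf : IsDominoTiling R f) (hh₁ : IsHeightFunction R f h₁)
    (hh₂ : IsHeightFunction R f h₂) {a b : ℤ} (hs : (a, b) ∈ R) :
    h₁ (a + 1, b) - h₂ (a + 1, b) = h₁ (a, b) - h₂ (a, b) ∧
    h₁ (a, b + 1) - h₂ (a, b + 1) = h₁ (a, b) - h₂ (a, b) ∧
    h₁ (a + 1, b + 1) - h₂ (a + 1, b + 1) = h₁ (a, b) - h₂ (a, b) := by
  obtain ⟨_, hne, hadj, hinv⟩ := hf.1 _ hs
  set q := f (a, b) with hq
  have hcase : (q = (a + 1, b)) ∨ (q = (a - 1, b)) ∨ (q = (a, b + 1)) ∨ (q = (a, b - 1)) := by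
    unfold SqAdj at hadj
    simp only at hadj
    have h1 := abs_cases ((a : ℤ) - q.1)
    have h2 := abs_cases ((b : ℤ) - q.2)
    simp only [Prod.ext_iff]
    rcases h1 with ⟨e1, _⟩ | ⟨e1, _⟩ <;> rcases h2 with ⟨e2, _⟩ | ⟨e2, _⟩ <;> omega
  -- left edge: f (a,b) ≠ (a-1,b) → g(a,b+1) = g(a,b)
  have eq_L : f (a, b) ≠ (a - 1, b) →
      h₁ (a, b + 1) - h₂ (a, b + 1) = h₁ (a, b) - h₂ (a, b) := by
    intro hne'
    apply vert_eq hh₁ hh₂ a b (Or.inr hs)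
    rintro ⟨hm1, _, hfe⟩
    have := hf.1 _ hm1
    rw [hfe] at this
    exact hne' this.2.2.2
  -- right edge
  have eq_R : f (a, b) ≠ (a + 1, b) →
      h₁ (a + 1, b + 1) - h₂ (a + 1, b + 1) = h₁ (a + 1, b) - h₂ (a + 1, b) := by
    intro hne'
    have key := vert_eq hh₁ hh₂ (a + 1) b ?_ ?_
    · exact key
    · left; simpa using hs
    · rintro ⟨hm1, _, hfe⟩
      apply hne'
      simpa using hfe
  -- bottom edge
  have eq_B : f (a, b) ≠ (a, b - 1) →
      h₁ (a + 1, b) - h₂ (a + 1, b) = h₁ (a, b) - h₂ (a, b) := by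
    intro hne'
    apply horiz_eq hh₁ hh₂ a b (Or.inr hs)
    rintro ⟨hm1, _, hfe⟩
    have := hf.1 _ hm1
    rw [hfe] at this
    exact hne' this.2.2.2
  -- top edge
  have eq_T : f (a, b) ≠ (a, b + 1) →
      h₁ (a + 1, b + 1) - h₂ (a + 1, b + 1) = h₁ (a, b + 1) - h₂ (a, b + 1) := by
    intro hne'
    have key := horiz_eq hh₁ hh₂ a (b + 1) ?_ ?_
    · exact key
    · left; simpa using hs
    · rintro ⟨hm1, _, hfe⟩
      apply hne'
      simpa using hfe
  rcases hcase with hc | hc | hc | hc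
  · -- f s = right; use L, B? no B needs ≠(a,b-1) ok, T ok, L ok
    have hL := eq_L (by rw [← hq, hc]; intro hcon; rw [Prod.mk.injEq] at hcon; omega)
    have hT := eq_T (by rw [← hq, hc]; intro hcon; rw [Prod.mk.injEq] at hcon; omega)
    -- need g(a+1,b) : via eq_R? no, R edge is crossed. use T and L for (a+1,b+1); (a+1,b) via ? 
    -- corners: (a,b) - (a,b+1) by L; (a,b+1)-(a+1,b+1) by T; (a+1,b+1)-(a+1,b) by R edge? crossed.
    -- (a+1,b)-(a,b) by B
    have hB := eq_B (by rw [← hq, hc]; intro hcon; rw [Prod.mk.injEq] at hcon; omega)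
    exact ⟨hB, hL, by omega⟩
  · have hB := eq_B (by rw [← hq, hc]; intro hcon; rw [Prod.mk.injEq] at hcon; omega)
    have hT := eq_T (by rw [← hq, hc]; intro hcon; rw [Prod.mk.injEq] at hcon; omega)
    have hR' := eq_R (by rw [← hq, hc]; intro hcon; rw [Prod.mk.injEq] at hcon; omega)
    exact ⟨hB, by omega, by omega⟩
  · have hL := eq_L (by rw [← hq, hc]; intro hcon; rw [Prod.mk.injEq] at hcon; omega)
    have hB := eq_B (by rw [← hq, hc]; intro hcon; rw [Prod.mk.injEq] at hcon; omega)
    have hR' := eq_R (by rw [← hq, hc]; intro hcon; rw [Prod.mk.injEq] at hcon; omega)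
    exact ⟨hB, hL, by omega⟩
  · have hL := eq_L (by rw [← hq, hc]; intro hcon; rw [Prod.mk.injEq] at hcon; omega)
    have hT := eq_T (by rw [← hq, hc]; intro hcon; rw [Prod.mk.injEq] at hcon; omega)
    have hR' := eq_R (by rw [← hq, hc]; intro hcon; rw [Prod.mk.injEq] at hcon; omega)
    exact ⟨by omega, hL, by omega⟩

end Aux

section Aux2

variable {R : Set (ℤ × ℤ)} {f : ℤ × ℤ → ℤ × ℤ} {h₁ h₂ : ℤ × ℤ → ℤ}

lemma base_eq (hf : IsDominoTiling R f) (hh₁ : IsHeightFunction R f h₁)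
    (hh₂ : IsHeightFunction R f h₂) {p q : ℤ × ℤ} (hp : p ∈ R) (hq : q ∈ R)
    (hadj : SqAdj p q) : h₁ p - h₂ p = h₁ q - h₂ q := by
  obtain ⟨a, b⟩ := p
  obtain ⟨c, d⟩ := q
  have hcase : (c = a + 1 ∧ d = b) ∨ (c = a - 1 ∧ d = b) ∨
      (c = a ∧ d = b + 1) ∨ (c = a ∧ d = b - 1) := by
    unfold SqAdj at hadj
    simp only at hadj
    have H1 := abs_cases ((a : ℤ) - c)
    have H2 := abs_cases ((b : ℤ) - d)
    rcases H1 with ⟨e1, _⟩ | ⟨e1, _⟩ <;> rcases H2 with ⟨e2, _⟩ | ⟨e2, _⟩ <;> omega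
  rcases hcase with ⟨hc, hd⟩ | ⟨hc, hd⟩ | ⟨hc, hd⟩ | ⟨hc, hd⟩ <;> subst hc <;> subst hd
  · exact (square_eq hf hh₁ hh₂ hp).1.symm
  · have := (square_eq hf hh₁ hh₂ hq).1
    rw [show (a - 1 + 1 : ℤ) = a from by ring] at this
    exact this
  · exact (square_eq hf hh₁ hh₂ hp).2.1.symm
  · have := (square_eq hf hh₁ hh₂ hq).2.1
    rw [show (b - 1 + 1 : ℤ) = b from by ring] at this
    exact this

lemma chain_eq (hf : IsDominoTiling R f) (hh₁ : IsHeightFunction R f h₁)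
    (hh₂ : IsHeightFunction R f h₂) {p q : ℤ × ℤ}
    (hch : Relation.ReflTransGen (fun a b => a ∈ R ∧ b ∈ R ∧ SqAdj a b) p q) :
    h₁ p - h₂ p = h₁ q - h₂ q := by
  induction hch with
  | refl => rfl
  | tail hab hbc ih => rw [ih, base_eq hf hh₁ hh₂ hbc.1 hbc.2.1 hbc.2.2]

end Aux2

/-- Two height functions for the same tiling differ by a constant: if `R` is a finite
edge-connected region, `f` a domino tiling of `R`, and `h₁`, `h₂` height functions for
`f`, then `h₁ = h₂ + c` on the lattice points of `R`, for some constant `c ∈ ℤ`. -/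
theorem stmt14 (R : Set (ℤ × ℤ)) (hR : R.Finite) (hconn : EdgeConnected R)
    (f : ℤ × ℤ → ℤ × ℤ) (hf : IsDominoTiling R f) (h₁ h₂ : ℤ × ℤ → ℤ)
    (hh₁ : IsHeightFunction R f h₁) (hh₂ : IsHeightFunction R f h₂) :
    ∃ c : ℤ, ∀ v : ℤ × ℤ, IsLatticePoint R v → h₁ v = h₂ v + c := by
  rcases R.eq_empty_or_nonempty with hE | ⟨p₀, hp₀⟩
  · exact ⟨0, fun v ⟨s, hs, _⟩ => absurd hs (by simp [hE])⟩
  · refine ⟨h₁ p₀ - h₂ p₀, fun v hv => ?_⟩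
    obtain ⟨s, hs, hv1, hv2⟩ := hv
    -- g v = g s
    have hvs : h₁ v - h₂ v = h₁ s - h₂ s := by
      obtain ⟨v1, v2⟩ := v
      obtain ⟨a, b⟩ := s
      have hsq := square_eq hf hh₁ hh₂ hs
      simp only at hv1 hv2
      rcases hv1 with hv1 | hv1 <;> rcases hv2 with hv2 | hv2 <;> subst hv1 <;> subst hv2
      · rfl
      · exact hsq.2.1
      · exact hsq.1
      · exact hsq.2.2
    -- g s = g p₀ along the chain
    have hsp : h₁ p₀ - h₂ p₀ = h₁ s - h₂ s :=
      chain_eq hf hh₁ hh₂ (hconn p₀ hp₀ s hs)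
    omega
end

section
/- A perfect matching of the half-hexagon graph R∨_n is uniquely determined by its set of vertical edges: if two perfect matchings of R∨_n contain exactly the same vertical edges, then they are equal. -/
/-- A unit triangle of the triangular lattice `𝓛` (vertex set `{a·v + b·w : a, b ∈ ℤ}`,
`v = (1,0)`, `w = (1/2, √3/2)`), encoded as `(a, b, o)`: for `o = true` the upward
triangle with corners `a·v + b·w`, `(a+1)·v + b·w`, `a·v + (b+1)·w`; for `o = false`
the downward triangle with corners `(a+1)·v + b·w`, `a·v + (b+1)·w`, `(a+1)·v + (b+1)·w`.
The vertices of the hexagonal lattice `𝓛∨` (the planar dual of `𝓛`) are the centroids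
of these triangles. -/
abbrev Tri : Type := ℤ × ℤ × Bool

/-- The upward triangle at `(a, b)`. -/
def triUp (a b : ℤ) : Tri := (a, b, true)

/-- The downward triangle at `(a, b)`. -/
def triDn (a b : ℤ) : Tri := (a, b, false)

/-- The centroid of a unit triangle of `𝓛`, a vertex of the hexagonal lattice `𝓛∨`. -/
noncomputable def centroid : Tri → ℝ × ℝ
  | (a, b, true) => ((a : ℝ) + (b : ℝ) / 2 + 1 / 2,
      (b : ℝ) * (Real.sqrt 3 / 2) + Real.sqrt 3 / 6)
  | (a, b, false) => ((a : ℝ) + (b : ℝ) / 2 + 1,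
      (b : ℝ) * (Real.sqrt 3 / 2) + Real.sqrt 3 / 3)

/-- Adjacency in the hexagonal lattice `𝓛∨`: two triangles are adjacent iff they share
a side.  The upward triangle `(a, b)` shares a side with exactly the downward triangles
`(a, b)`, `(a-1, b)` and `(a, b-1)`; the side shared with `(a, b-1)` is parallel to
`v` (horizontal), so the dual edge is the vertical edge of `𝓛∨`. -/
def TriAdj (t s : Tri) : Prop :=
  ∃ a b : ℤ,
    (t = triUp a b ∧ (s = triDn a b ∨ s = triDn (a - 1) b ∨ s = triDn a (b - 1))) ∨
    (s = triUp a b ∧ (t = triDn a b ∨ t = triDn (a - 1) b ∨ t = triDn a (b - 1)))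

/-- The region `R_n ⊆ ℝ²`: the union of the closed trapezoid with corners `n·v`, `n·w`,
`n·(w - v)`, `-n·v` and the `n` closed small trapezoids with corners `c + v`, `c - v`,
`c - w`, `c + v - w`, where `c = (2i - n + 1)·v`, for `i = 0, …, n-1`. -/
noncomputable def HHRegion (n : ℕ) : Set (ℝ × ℝ) :=
  convexHull ℝ
    {((n : ℝ), 0), ((n : ℝ) / 2, (n : ℝ) * (Real.sqrt 3 / 2)),
      (-(n : ℝ) / 2, (n : ℝ) * (Real.sqrt 3 / 2)), (-(n : ℝ), 0)} ∪
  ⋃ i ∈ Finset.range n,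
    convexHull ℝ
      {((2 * (i : ℝ) - (n : ℝ) + 1) + 1, 0), ((2 * (i : ℝ) - (n : ℝ) + 1) - 1, 0),
        ((2 * (i : ℝ) - (n : ℝ) + 1) - 1 / 2, -(Real.sqrt 3 / 2)),
        ((2 * (i : ℝ) - (n : ℝ) + 1) + 1 / 2, -(Real.sqrt 3 / 2))}

/-- The vertex set of the half-hexagon graph `R∨_n`: the vertices of `𝓛∨` (centroids
of the triangles of `𝓛`) lying within `R_n`.  The graph `R∨_n` is the subgraph of
`𝓛∨` induced by these vertices. -/
noncomputable def HHVerts (n : ℕ) : Set Tri := {t | centroid t ∈ HHRegion n}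

/-- `m` encodes a perfect matching of the half-hexagon graph `R∨_n`: it pairs each
vertex of `R∨_n` with a distinct adjacent vertex of `R∨_n`, involutively, and fixes
everything else.  Such involutions correspond exactly to perfect matchings (sets
of edges of the induced subgraph covering every vertex exactly once). -/
def IsHHMatching (n : ℕ) (m : Tri → Tri) : Prop :=
  (∀ t ∈ HHVerts n, m t ∈ HHVerts n ∧ m t ≠ t ∧ TriAdj t (m t) ∧ m (m t) = t) ∧
  (∀ t ∉ HHVerts n, m t = t)

lemma triUp_ne_triDn (a b x y : ℤ) : triUp a b ≠ triDn x y := by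
  simp [triUp, triDn]

lemma triUp_inj {a b x y : ℤ} : triUp a b = triUp x y ↔ a = x ∧ b = y := by
  simp [triUp, Prod.ext_iff]

lemma triDn_inj {a b x y : ℤ} : triDn a b = triDn x y ↔ a = x ∧ b = y := by
  simp [triDn, Prod.ext_iff]

lemma up_cases {a b : ℤ} {s : Tri} (h : TriAdj (triUp a b) s) :
    s = triDn a b ∨ s = triDn (a - 1) b ∨ s = triDn a (b - 1) := by
  obtain ⟨x, y, ⟨h1, h2⟩ | ⟨h1, h2⟩⟩ := h
  · obtain ⟨rfl, rfl⟩ := triUp_inj.mp h1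
    exact h2
  · rcases h2 with h2 | h2 | h2 <;> simp [triUp, triDn, Prod.ext_iff] at h2

lemma dn_cases {a b : ℤ} {s : Tri} (h : TriAdj (triDn a b) s) :
    s = triUp a b ∨ s = triUp (a + 1) b ∨ s = triUp a (b + 1) := by
  obtain ⟨x, y, ⟨h1, h2⟩ | ⟨h1, h2⟩⟩ := h
  · simp [triUp, triDn, Prod.ext_iff] at h1
  · rcases h2 with h2 | h2 | h2 <;> obtain ⟨hx, hy⟩ := triDn_inj.mp h2
    · subst hx; subst hy; exact Or.inl h1
    · have hx' : x = a + 1 := by omega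
      subst hx'; subst hy; exact Or.inr (Or.inl h1)
    · have hy' : y = b + 1 := by omega
      subst hx; subst hy'; exact Or.inr (Or.inr h1)

lemma flipEq {n : ℕ} {m : Tri → Tri} (hm : IsHHMatching n m) {a b x y : ℤ}
    (hd : triDn x y ∈ HHVerts n) :
    m (triDn x y) = triUp a b ↔ m (triUp a b) = triDn x y := by
  constructor
  · intro h
    have h2 := (hm.1 _ hd).2.2.2
    rw [h] at h2; exact h2
  · intro h
    by_cases hu : triUp a b ∈ HHVerts n
    · have h2 := (hm.1 _ hu).2.2.2
      rw [h] at h2; exact h2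
    · rw [hm.2 _ hu] at h
      exact absurd h (triUp_ne_triDn _ _ _ _)

lemma region_bound {n : ℕ} {p : ℝ × ℝ} (hp : p ∈ HHRegion n) :
    -(n : ℝ) ≤ p.1 ∧ p.2 ≤ (n : ℝ) * (Real.sqrt 3 / 2) := by
  have hS : Convex ℝ {q : ℝ × ℝ | -(n : ℝ) ≤ q.1 ∧ q.2 ≤ (n : ℝ) * (Real.sqrt 3 / 2)} := by
    rw [Set.setOf_and]
    exact (convex_halfSpace_ge (⟨fun _ _ => rfl, fun _ _ => rfl⟩ :
        IsLinearMap ℝ fun q : ℝ × ℝ => q.1) _).inter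
      (convex_halfSpace_le (⟨fun _ _ => rfl, fun _ _ => rfl⟩ :
        IsLinearMap ℝ fun q : ℝ × ℝ => q.2) _)
  have hn : (0 : ℝ) ≤ n := Nat.cast_nonneg n
  have h3 : (0 : ℝ) ≤ Real.sqrt 3 := Real.sqrt_nonneg 3
  rcases hp with hp | hp
  · refine convexHull_min ?_ hS hp
    intro q hq
    simp only [Set.mem_insert_iff, Set.mem_singleton_iff] at hq
    rcases hq with rfl | rfl | rfl | rfl <;> exact ⟨by dsimp only; nlinarith, by dsimp only; nlinarith⟩
  · simp only [Set.mem_iUnion, Finset.mem_range] at hp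
    obtain ⟨i, hi, hp⟩ := hp
    have hi' : (0 : ℝ) ≤ i := Nat.cast_nonneg i
    refine convexHull_min ?_ hS hp
    intro q hq
    simp only [Set.mem_insert_iff, Set.mem_singleton_iff] at hq
    rcases hq with rfl | rfl | rfl | rfl <;> exact ⟨by dsimp only; nlinarith, by dsimp only; nlinarith⟩

lemma dn_bound {n : ℕ} {a b : ℤ} (h : triDn a b ∈ HHVerts n) :
    -(2 * (n : ℤ)) - 1 ≤ a := by
  have h' := region_bound (n := n) (p := centroid (triDn a b)) h
  simp only [triDn, centroid] at h'
  obtain ⟨hx, hy⟩ := h'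
  have hs : (0 : ℝ) < Real.sqrt 3 := Real.sqrt_pos.mpr (by norm_num)
  have hb : (b : ℝ) ≤ n := by nlinarith
  have : -(2 * (n : ℝ)) - 1 ≤ (a : ℝ) := by
    have hn : (0 : ℝ) ≤ n := Nat.cast_nonneg n
    nlinarith
  exact_mod_cast this

/-- A perfect matching of the half-hexagon graph `R∨_n` is determined by its vertical
edges.  The vertical edges of `𝓛∨` (those dual to horizontal edges of `𝓛`, i.e. to
sides parallel to `v`) are exactly the edges joining `triUp a b` and `triDn a (b - 1)`.
If two perfect matchings of `R∨_n` contain exactly the same vertical edges, they are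
equal. -/
theorem stmt16 (n : ℕ) (m₁ m₂ : Tri → Tri)
    (hm₁ : IsHHMatching n m₁) (hm₂ : IsHHMatching n m₂)
    (hvert : ∀ a b : ℤ, m₁ (triUp a b) = triDn a (b - 1) ↔ m₂ (triUp a b) = triDn a (b - 1)) :
    m₁ = m₂ := by
  have tri_up : ∀ (m : Tri → Tri), IsHHMatching n m → ∀ a b : ℤ, triUp a b ∈ HHVerts n →
      m (triUp a b) = triDn a b ∨ m (triUp a b) = triDn (a - 1) b ∨
        m (triUp a b) = triDn a (b - 1) :=
    fun m hm a b hu => up_cases (hm.1 _ hu).2.2.1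
  have tri_dn : ∀ (m : Tri → Tri), IsHHMatching n m → ∀ a b : ℤ, triDn a b ∈ HHVerts n →
      m (triDn a b) = triUp a b ∨ m (triDn a b) = triUp (a + 1) b ∨
        m (triDn a b) = triUp a (b + 1) :=
    fun m hm a b hd => dn_cases (hm.1 _ hd).2.2.1
  -- if the target `dn` is not a vertex, no `up` vertex maps to it
  have notmem : ∀ (m : Tri → Tri), IsHHMatching n m → ∀ a b x y : ℤ,
      triDn x y ∉ HHVerts n → m (triUp a b) ≠ triDn x y := by
    intro m hm a b x y hd h
    by_cases hu : triUp a b ∈ HHVerts n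
    · exact hd (h ▸ (hm.1 _ hu).1)
    · rw [hm.2 _ hu] at h
      exact triUp_ne_triDn _ _ _ _ h
  -- characterization of the left edge at (a, b)
  have char : ∀ (m : Tri → Tri), IsHHMatching n m → ∀ a b : ℤ,
      triUp a b ∈ HHVerts n → triDn (a - 1) b ∈ HHVerts n →
      (m (triUp a b) = triDn (a - 1) b ↔
        ¬ m (triUp (a - 1) b) = triDn (a - 1) b ∧
          ¬ m (triUp (a - 1) (b + 1)) = triDn (a - 1) b) := by
    intro m hm a b hu hd
    rw [← flipEq hm hd, ← flipEq hm hd, ← flipEq hm hd]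
    have h3 := tri_dn m hm (a - 1) b hd
    rw [show a - 1 + 1 = a from by ring] at h3
    constructor
    · intro h
      rw [h]
      constructor <;> intro hc <;> (obtain ⟨h4, h5⟩ := triUp_inj.mp hc; omega)
    · rintro ⟨h1, h2⟩
      rcases h3 with h3 | h3 | h3
      · exact absurd h3 h1
      · exact h3
      · exact absurd h3 h2
  -- characterization of the right edge at (a, b)
  have rchar : ∀ (m : Tri → Tri), IsHHMatching n m → ∀ a b : ℤ, triUp a b ∈ HHVerts n →
      (m (triUp a b) = triDn a b ↔
        ¬ m (triUp a b) = triDn (a - 1) b ∧ ¬ m (triUp a b) = triDn a (b - 1)) := by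
    intro m hm a b hu
    have h3 := tri_up m hm a b hu
    constructor
    · intro h
      rw [h]
      constructor <;> intro hc <;> (obtain ⟨h4, h5⟩ := triDn_inj.mp hc; omega)
    · rintro ⟨h1, h2⟩
      rcases h3 with h3 | h3 | h3
      · exact h3
      · exact absurd h3 h1
      · exact absurd h3 h2
  -- agreement on left edges, by induction from the left end of each row
  have L : ∀ k : ℕ, ∀ a b : ℤ, a + 2 * n + 2 ≤ (k : ℤ) →
      (m₁ (triUp a b) = triDn (a - 1) b ↔ m₂ (triUp a b) = triDn (a - 1) b) := by
    intro k
    induction k with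
    | zero =>
      intro a b ha
      have hd : triDn (a - 1) b ∉ HHVerts n := fun h => by have := dn_bound h; omega
      exact iff_of_false (notmem m₁ hm₁ _ _ _ _ hd) (notmem m₂ hm₂ _ _ _ _ hd)
    | succ k ih =>
      intro a b ha
      by_cases hd : triDn (a - 1) b ∈ HHVerts n
      · by_cases hu : triUp a b ∈ HHVerts n
        · rw [char m₁ hm₁ a b hu hd, char m₂ hm₂ a b hu hd]
          have hA : (m₁ (triUp (a - 1) b) = triDn (a - 1) b ↔
              m₂ (triUp (a - 1) b) = triDn (a - 1) b) := by
            by_cases hu' : triUp (a - 1) b ∈ HHVerts n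
            · rw [rchar m₁ hm₁ _ _ hu', rchar m₂ hm₂ _ _ hu',
                ih (a - 1) b (by push_cast at ha ⊢; omega), hvert (a - 1) b]
            · rw [hm₁.2 _ hu', hm₂.2 _ hu']
          have hB : (m₁ (triUp (a - 1) (b + 1)) = triDn (a - 1) b ↔
              m₂ (triUp (a - 1) (b + 1)) = triDn (a - 1) b) := by
            have h := hvert (a - 1) (b + 1)
            rw [show b + 1 - 1 = b from by ring] at h
            exact h
          rw [hA, hB]
        · rw [hm₁.2 _ hu, hm₂.2 _ hu]
      · exact iff_of_false (notmem m₁ hm₁ _ _ _ _ hd) (notmem m₂ hm₂ _ _ _ _ hd)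
  have L' : ∀ a b : ℤ, (m₁ (triUp a b) = triDn (a - 1) b ↔ m₂ (triUp a b) = triDn (a - 1) b) :=
    fun a b => L (a + 2 * n + 2).toNat a b (Int.self_le_toNat _)
  -- full agreement on up triangles
  have upAgree : ∀ a b : ℤ, m₁ (triUp a b) = m₂ (triUp a b) := by
    intro a b
    by_cases hu : triUp a b ∈ HHVerts n
    · rcases tri_up m₁ hm₁ a b hu with h | h | h
      · rcases tri_up m₂ hm₂ a b hu with h' | h' | h'
        · rw [h, h']
        · have := (L' a b).mpr h'
          rw [h] at this
          obtain ⟨h4, h5⟩ := triDn_inj.mp this; omega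
        · have := (hvert a b).mpr h'
          rw [h] at this
          obtain ⟨h4, h5⟩ := triDn_inj.mp this; omega
      · rw [h, (L' a b).mp h]
      · rw [h, (hvert a b).mp h]
    · rw [hm₁.2 _ hu, hm₂.2 _ hu]
  funext t
  obtain ⟨a, b, o⟩ := t
  cases o with
  | true => exact upAgree a b
  | false =>
    by_cases hd : triDn a b ∈ HHVerts n
    · have key : ∀ x y : ℤ, m₁ (triDn a b) = triUp x y → m₁ (triDn a b) = m₂ (triDn a b) := by
        intro x y h
        have hs : triUp x y ∈ HHVerts n := h ▸ (hm₁.1 _ hd).1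
        have h1 : m₁ (triUp x y) = triDn a b := by
          have h2 := (hm₁.1 _ hd).2.2.2
          rw [h] at h2; exact h2
        have h2 : m₂ (triUp x y) = triDn a b := by rw [← upAgree x y]; exact h1
        have h3 : m₂ (triDn a b) = triUp x y := by
          have h4 := (hm₂.1 _ hs).2.2.2
          rw [h2] at h4; exact h4
        rw [h, h3]
      rcases tri_dn m₁ hm₁ a b hd with h | h | h
      · exact key _ _ h
      · exact key _ _ h
      · exact key _ _ h
    · show m₁ (triDn a b) = m₂ (triDn a b)
      rw [hm₁.2 _ hd, hm₂.2 _ hd]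
end
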